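/- arXiv:2102.07705 — 6 statements merged into one kernel-verified Lean document; each statement's English description precedes it below -/
import Mathlib

section
/- For every n ≥ 1 and every oriented path P on n vertices, there exists a finite acyclic digraph D such that for every 2-coloring c : V(D) → Fin 2 there is an induced copy of P in D all of whose vertices receive the same color under c; equivalently, D admits no P-free 2-coloring. -/
/-- A simple digraph on vertex type `V`: no loops and no anti-parallel arcs. -/
structure Digraph' (V : Type*) : Type _ where
  Adj : V → V → Prop
  loopless : ∀ v, ¬ Adj v v
  asymm : ∀ u v, Adj u v → ¬ Adj v u

/-- An induced copy of the digraph `F` in the digraph `D`, given by the embedding `φ`. -/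
def IsInducedCopy {α β : Type*} (F : Digraph' α) (D : Digraph' β) (φ : α → β) : Prop :=
  Function.Injective φ ∧ ∀ u v : α, D.Adj (φ u) (φ v) ↔ F.Adj u v

/-- The image of `φ` is monochromatic under the coloring `c`. -/
def Monochromatic {α β : Type*} {k : ℕ} (c : β → Fin k) (φ : α → β) : Prop :=
  ∃ i : Fin k, ∀ u : α, c (φ u) = i

/-- The coloring `c` of `D` is `F`-free: no induced copy of `F` in `D` is monochromatic. -/
def IsFFreeColoring {α β : Type*} (F : Digraph' α) (D : Digraph' β) {k : ℕ}
    (c : β → Fin k) : Prop :=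
  ∀ φ : α → β, IsInducedCopy F D φ → ¬ Monochromatic c φ

/-- A digraph is acyclic if it contains no directed cycle. -/
def Digraph'.Acyclic {β : Type*} (D : Digraph' β) : Prop :=
  ∀ v : β, ¬ Relation.TransGen D.Adj v v

/-- The underlying simple graph of a digraph. -/
def Digraph'.underlying {V : Type*} (D : Digraph' V) : SimpleGraph V where
  Adj u v := D.Adj u v ∨ D.Adj v u
  symm := ⟨fun _ _ h => Or.symm h⟩
  loopless := ⟨fun v h => h.elim (D.loopless v) (D.loopless v)⟩

/-- `P` is an oriented path on `n` vertices `0, 1, …, n-1` (in path order):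
for each `i < n-1` exactly one of `(i, i+1)`, `(i+1, i)` is an arc (exactness of the choice
is already guaranteed by `asymm`), and there are no other arcs. -/
def IsOrientedPath {n : ℕ} (P : Digraph' (Fin n)) : Prop :=
  (∀ u v : Fin n, P.Adj u v → u.val + 1 = v.val ∨ v.val + 1 = u.val) ∧
  (∀ i : Fin n, ∀ h : i.val + 1 < n, P.Adj i ⟨i.val + 1, h⟩ ∨ P.Adj ⟨i.val + 1, h⟩ i)

def preD {n : ℕ} (P : Digraph' (Fin n)) (k : ℕ) (h : k ≤ n) : Digraph' (Fin k) where
  Adj u v := P.Adj (Fin.castLE h u) (Fin.castLE h v)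
  loopless _ := P.loopless _
  asymm _ _ := P.asymm _ _

def sumD {β : Type} (D : Digraph' β) (S : Set β) : Digraph' (β ⊕ β) where
  Adj x y := match x, y with
    | .inl a, .inl b => D.Adj a b
    | .inr a, .inr b => D.Adj a b
    | .inl a, .inr b => a ∈ S ∧ b ∈ S
    | .inr _, .inl _ => False
  loopless x := by cases x <;> exact D.loopless _
  asymm x y h := by
    cases x <;> cases y <;> simp_all <;> exact D.asymm _ _ h

lemma sumD_acyclic {β : Type} (D : Digraph' β) (hD : D.Acyclic) (S : Set β) :
    (sumD D S).Acyclic := by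
  have key : ∀ x y, Relation.TransGen (sumD D S).Adj x y →
      (match x, y with
       | Sum.inl a, Sum.inl b => Relation.TransGen D.Adj a b
       | Sum.inr a, Sum.inr b => Relation.TransGen D.Adj a b
       | Sum.inl _, Sum.inr _ => True
       | Sum.inr _, Sum.inl _ => False) := by
    intro x y h
    induction h with
    | @single y h' =>
      cases x <;> cases y <;>
        first
          | trivial
          | exact Relation.TransGen.single h'
    | @tail b z h₁ h₂ ih =>
      cases x <;> cases b <;> cases z <;>
        first
          | trivial
          | exact ih.elim
          | exact h₂.elim
          | exact ih.tail h₂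
  intro v hv
  cases v with
  | inl a => exact hD a (key _ _ hv)
  | inr a => exact hD a (key _ _ hv)

lemma path_acyclic {n : ℕ} (P : Digraph' (Fin n)) (hP : IsOrientedPath P) : P.Acyclic := by
  have key : ∀ u v : Fin n, Relation.TransGen P.Adj u v →
      ((u.val < v.val ∧ ∃ w : Fin n, w.val + 1 = v.val ∧ P.Adj w v) ∨
       (v.val < u.val ∧ ∃ w : Fin n, v.val + 1 = w.val ∧ P.Adj w v)) := by
    intro u v h
    induction h with
    | @single v h' =>
      rcases hP.1 _ _ h' with h1 | h1
      · exact Or.inl ⟨by omega, u, h1, h'⟩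
      · exact Or.inr ⟨by omega, u, h1, h'⟩
    | @tail b z h₁ h₂ ih =>
      rcases hP.1 _ _ h₂ with hbc | hbc
      · rcases ih with ⟨hub, _⟩ | ⟨hbu, w, hw, hwb⟩
        · exact Or.inl ⟨by omega, b, hbc, h₂⟩
        · exact absurd (show w = z from Fin.ext (by omega)) (fun e => P.asymm _ _ h₂ (e ▸ hwb))
      · rcases ih with ⟨hub, w, hw, hwb⟩ | ⟨hbu, _⟩
        · exact absurd (show w = z from Fin.ext (by omega)) (fun e => P.asymm _ _ h₂ (e ▸ hwb))
        · exact Or.inr ⟨by omega, b, hbc, h₂⟩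
  intro v hv
  rcases key v v hv with ⟨h, _⟩ | ⟨h, _⟩ <;> omega

lemma main {n : ℕ} (P : Digraph' (Fin n)) (hP : IsOrientedPath P) :
    ∀ k, ∀ hk : k + 1 ≤ n,
    ∃ (β : Type) (_ : Fintype β) (D : Digraph' β) (S : Set β), D.Acyclic ∧
      ∀ c : β → Fin 2,
        (∃ φ : Fin n → β, IsInducedCopy P D φ ∧ Monochromatic c φ) ∨
        (∀ i : Fin 2, ∃ φ : Fin (k+1) → β, IsInducedCopy (preD P (k+1) hk) D φ ∧
          (∀ u, c (φ u) = i) ∧ (∀ j : Fin (k+1), φ j ∈ S ↔ j.val = k)) := by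
  intro k
  induction k with
  | zero =>
    intro hk
    refine ⟨Fin n, inferInstance, P, Set.univ, path_acyclic P hP, ?_⟩
    intro c
    by_cases hc : ∀ v, c v = c ⟨0, hk⟩
    · exact Or.inl ⟨id, ⟨Function.injective_id, fun u v => Iff.rfl⟩, ⟨c ⟨0, hk⟩, hc⟩⟩
    · push_neg at hc
      obtain ⟨v, hv⟩ := hc
      refine Or.inr (fun i => ?_)
      have hx : ∃ x : Fin n, c x = i := by
        rcases Fin.exists_fin_two.mp ⟨i, rfl⟩ with h | h
        all_goals {
          by_cases h0 : c v = i
          · exact ⟨v, h0⟩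
          · refine ⟨⟨0, hk⟩, ?_⟩
            have h1 := (c v).isLt
            have h2 := (c ⟨0, hk⟩).isLt
            have h3 := i.isLt
            rw [Fin.ext_iff] at *
            omega }
      obtain ⟨x, hxi⟩ := hx
      refine ⟨fun _ => x, ⟨fun a b _ => Fin.ext (by omega), ?_⟩, fun _ => hxi, ?_⟩
      · intro u v
        have huv : u = v := Fin.ext (by omega)
        subst huv
        exact iff_of_false (P.loopless x) ((preD P (0+1) hk).loopless u)
      · intro j
        exact iff_of_true (Set.mem_univ x) (by omega)
  | succ k ih =>
    intro hk
    obtain ⟨β, iβ, D, S, hac, hprop⟩ := ih (by omega)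
    haveI := iβ
    have hdir := hP.2 ⟨k, by omega⟩ (show k + 1 < n by omega)
    rcases hdir with hfwd | hbwd
    · -- forward arc from vertex k to vertex k+1
      refine ⟨β ⊕ β, inferInstance, sumD D S, Sum.inr '' S, sumD_acyclic D hac S, ?_⟩
      intro c
      rcases hprop (c ∘ Sum.inl) with ⟨φ, hcopy, hmono⟩ | bcL
      · exact Or.inl ⟨Sum.inl ∘ φ, ⟨Sum.inl_injective.comp hcopy.1,
          fun u v => hcopy.2 u v⟩, hmono⟩
      rcases hprop (c ∘ Sum.inr) with ⟨φ, hcopy, hmono⟩ | bcR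
      · exact Or.inl ⟨Sum.inr ∘ φ, ⟨Sum.inr_injective.comp hcopy.1,
          fun u v => hcopy.2 u v⟩, hmono⟩
      refine Or.inr (fun i => ?_)
      obtain ⟨φ, hφc, hφm, hφS⟩ := bcL i
      obtain ⟨ψ, hψc, hψm, hψS⟩ := bcR i
      set w : β := ψ ⟨k, by omega⟩ with hw
      have hwS : w ∈ S := (hψS _).mpr rfl
      have hwc : c (Sum.inr w) = i := hψm _
      refine ⟨Fin.snoc (fun j => Sum.inl (φ j)) (Sum.inr w), ⟨?_, ?_⟩, ?_, ?_⟩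
      · -- injective
        intro a b hab
        rcases Fin.eq_castSucc_or_eq_last a with ⟨a', rfl⟩ | rfl <;>
          rcases Fin.eq_castSucc_or_eq_last b with ⟨b', rfl⟩ | rfl <;>
          simp only [Fin.snoc_castSucc, Fin.snoc_last] at hab
        · exact congrArg Fin.castSucc (hφc.1 (Sum.inl_injective hab))
        · exact absurd hab (by simp)
        · exact absurd hab (by simp)
        · rfl
      · -- adjacency
        intro u v
        rcases Fin.eq_castSucc_or_eq_last u with ⟨u', rfl⟩ | rfl <;>
          rcases Fin.eq_castSucc_or_eq_last v with ⟨v', rfl⟩ | rfl <;>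
          simp only [Fin.snoc_castSucc, Fin.snoc_last]
        · exact hφc.2 u' v'
        · -- castSucc, last : the new arc
          constructor
          · rintro ⟨h1, -⟩
            have hu : u'.val = k := (hφS u').mp h1
            have e1 : Fin.castLE hk u'.castSucc = (⟨k, by omega⟩ : Fin n) :=
              Fin.ext (by simpa using hu)
            show P.Adj _ _
            rw [e1]
            exact hfwd
          · intro h2
            have hval := hP.1 _ _ h2
            simp only [Fin.coe_castLE, Fin.coe_castSucc, Fin.val_last] at hval
            exact ⟨(hφS u').mpr (by omega), hwS⟩
        · -- last, castSucc : no arc back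
          refine iff_of_false (fun h => h) (fun h2 => ?_)
          have hval := hP.1 _ _ h2
          simp only [Fin.coe_castLE, Fin.coe_castSucc, Fin.val_last] at hval
          have hv : v'.val = k := by omega
          have h2' : P.Adj (Fin.castLE hk (Fin.last (k+1))) (Fin.castLE hk v'.castSucc) := h2
          have e1 : Fin.castLE hk v'.castSucc = (⟨k, by omega⟩ : Fin n) :=
            Fin.ext (by simpa using hv)
          rw [e1] at h2'
          exact P.asymm _ _ hfwd h2'
        · exact iff_of_false (D.loopless w) ((preD P (k+2) hk).loopless _)
      · -- monochromatic
        intro u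
        rcases Fin.eq_castSucc_or_eq_last u with ⟨u', rfl⟩ | rfl <;>
          simp only [Fin.snoc_castSucc, Fin.snoc_last]
        · exact hφm u'
        · exact hwc
      · -- membership in new S
        intro j
        rcases Fin.eq_castSucc_or_eq_last j with ⟨j', rfl⟩ | rfl <;>
          simp only [Fin.snoc_castSucc, Fin.snoc_last]
        · refine iff_of_false ?_ (by simp; omega)
          rintro ⟨x, -, hx⟩
          exact absurd hx (by simp)
        · exact iff_of_true ⟨w, hwS, rfl⟩ (by simp)
    · -- backward arc from vertex k+1 to vertex k
      refine ⟨β ⊕ β, inferInstance, sumD D S, Sum.inl '' S, sumD_acyclic D hac S, ?_⟩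
      intro c
      rcases hprop (c ∘ Sum.inl) with ⟨φ, hcopy, hmono⟩ | bcL
      · exact Or.inl ⟨Sum.inl ∘ φ, ⟨Sum.inl_injective.comp hcopy.1,
          fun u v => hcopy.2 u v⟩, hmono⟩
      rcases hprop (c ∘ Sum.inr) with ⟨φ, hcopy, hmono⟩ | bcR
      · exact Or.inl ⟨Sum.inr ∘ φ, ⟨Sum.inr_injective.comp hcopy.1,
          fun u v => hcopy.2 u v⟩, hmono⟩
      refine Or.inr (fun i => ?_)
      obtain ⟨φ, hφc, hφm, hφS⟩ := bcR i
      obtain ⟨ψ, hψc, hψm, hψS⟩ := bcL i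
      set w : β := ψ ⟨k, by omega⟩ with hw
      have hwS : w ∈ S := (hψS _).mpr rfl
      have hwc : c (Sum.inl w) = i := hψm _
      refine ⟨Fin.snoc (fun j => Sum.inr (φ j)) (Sum.inl w), ⟨?_, ?_⟩, ?_, ?_⟩
      · intro a b hab
        rcases Fin.eq_castSucc_or_eq_last a with ⟨a', rfl⟩ | rfl <;>
          rcases Fin.eq_castSucc_or_eq_last b with ⟨b', rfl⟩ | rfl <;>
          simp only [Fin.snoc_castSucc, Fin.snoc_last] at hab
        · exact congrArg Fin.castSucc (hφc.1 (Sum.inr_injective hab))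
        · exact absurd hab (by simp)
        · exact absurd hab (by simp)
        · rfl
      · intro u v
        rcases Fin.eq_castSucc_or_eq_last u with ⟨u', rfl⟩ | rfl <;>
          rcases Fin.eq_castSucc_or_eq_last v with ⟨v', rfl⟩ | rfl <;>
          simp only [Fin.snoc_castSucc, Fin.snoc_last]
        · exact hφc.2 u' v'
        · -- castSucc, last : no arc forward
          refine iff_of_false (fun h => h) (fun h2 => ?_)
          have hval := hP.1 _ _ h2
          simp only [Fin.coe_castLE, Fin.coe_castSucc, Fin.val_last] at hval
          have hu : u'.val = k := by omega
          have h2' : P.Adj (Fin.castLE hk u'.castSucc) (Fin.castLE hk (Fin.last (k+1))) := h2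
          have e1 : Fin.castLE hk u'.castSucc = (⟨k, by omega⟩ : Fin n) :=
            Fin.ext (by simpa using hu)
          rw [e1] at h2'
          exact P.asymm _ _ hbwd h2'
        · -- last, castSucc : the new arc
          constructor
          · rintro ⟨-, h1⟩
            have hv : v'.val = k := (hφS v').mp h1
            have e1 : Fin.castLE hk v'.castSucc = (⟨k, by omega⟩ : Fin n) :=
              Fin.ext (by simpa using hv)
            show P.Adj _ _
            rw [e1]
            exact hbwd
          · intro h2
            have hval := hP.1 _ _ h2
            simp only [Fin.coe_castLE, Fin.coe_castSucc, Fin.val_last] at hval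
            exact ⟨hwS, (hφS v').mpr (by omega)⟩
        · exact iff_of_false (D.loopless w) ((preD P (k+2) hk).loopless _)
      · intro u
        rcases Fin.eq_castSucc_or_eq_last u with ⟨u', rfl⟩ | rfl <;>
          simp only [Fin.snoc_castSucc, Fin.snoc_last]
        · exact hφm u'
        · exact hwc
      · intro j
        rcases Fin.eq_castSucc_or_eq_last j with ⟨j', rfl⟩ | rfl <;>
          simp only [Fin.snoc_castSucc, Fin.snoc_last]
        · refine iff_of_false ?_ (by simp; omega)
          rintro ⟨x, -, hx⟩
          exact absurd hx (by simp)
        · exact iff_of_true ⟨w, hwS, rfl⟩ (by simp)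

/-- For every `n ≥ 1` and every oriented path `P` on `n` vertices there is a finite acyclic
digraph `D` such that every `2`-coloring of `D` has a monochromatic induced copy of `P`;
equivalently, `D` admits no `P`-free `2`-coloring. -/
theorem statement0 {n : ℕ} (hn : 1 ≤ n) (P : Digraph' (Fin n)) (hP : IsOrientedPath P) :
    ∃ (m : ℕ) (D : Digraph' (Fin m)), D.Acyclic ∧
      ∀ c : Fin m → Fin 2, ∃ φ : Fin n → Fin m,
        IsInducedCopy P D φ ∧ Monochromatic c φ := by
  obtain ⟨t, rfl⟩ : ∃ t, n = t + 1 := ⟨n - 1, by omega⟩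
  obtain ⟨β, iβ, D, S, hac, hprop⟩ := main P hP t le_rfl
  haveI := iβ
  set e := Fintype.equivFin β with he
  refine ⟨Fintype.card β,
    ⟨fun x y => D.Adj (e.symm x) (e.symm y), fun v => D.loopless _,
      fun u v h => D.asymm _ _ h⟩, ?_, ?_⟩
  · intro v hv
    exact hac (e.symm v) (Relation.TransGen.lift e.symm (fun a b h => h) _ _ hv)
  · intro c
    rcases hprop (fun b => c (e b)) with ⟨φ, hcopy, hmono⟩ | bc
    · refine ⟨e ∘ φ, ⟨e.injective.comp hcopy.1, fun u v => ?_⟩, ?_⟩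
      · show D.Adj (e.symm (e (φ u))) (e.symm (e (φ v))) ↔ _
        rw [Equiv.symm_apply_apply, Equiv.symm_apply_apply]
        exact hcopy.2 u v
      · obtain ⟨i, hi⟩ := hmono
        exact ⟨i, fun u => hi u⟩
    · obtain ⟨φ, hcopy, hmonoi, hS⟩ := bc 0
      refine ⟨e ∘ φ, ⟨e.injective.comp hcopy.1, fun u v => ?_⟩, ?_⟩
      · show D.Adj (e.symm (e (φ u))) (e.symm (e (φ v))) ↔ _
        rw [Equiv.symm_apply_apply, Equiv.symm_apply_apply]
        exact hcopy.2 u v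
      · exact ⟨0, fun u => hmonoi u⟩
end

section
/- Let T be an oriented tree on at least 3 vertices with exactly ℓ leaves, and let lrem(T) denote the induced subdigraph of T on its non-leaf vertices. Let D be any finite digraph, and let D' be the digraph obtained from D by adding, for each vertex v of D, 2ℓ pairwise disjoint new copies T⁺₁,…,T⁺_ℓ, T⁻₁,…,T⁻_ℓ of T, together with all arcs (v,u) for u a vertex of a copy T⁺_j and all arcs (u,v) for u a vertex of a copy T⁻_j (j = 1,…,ℓ). Then D' admits a T-free 2-coloring if and only if D admits a lrem(T)-free 2-coloring. Moreover, D' is acyclic if and only if D is acyclic. -/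
/-- `v` is a leaf of the digraph `T`: it has exactly one neighbor in the underlying graph. -/
def IsLeaf {α : Type*} (T : Digraph' α) (v : α) : Prop :=
  ∃! w : α, T.underlying.Adj v w

/-- The induced subdigraph of `D` on the vertex set `S`. -/
def inducedSub {α : Type*} (D : Digraph' α) (S : Set α) : Digraph' S where
  Adj u v := D.Adj u.1 v.1
  loopless v := D.loopless v.1
  asymm u v h := D.asymm u.1 v.1 h

/-- The arc relation of the digraph `D'` obtained from `D` by adding, for each vertex `v` of
`D`, `2ℓ` disjoint copies of `T` (indexed by `Fin ℓ × Bool`; `true` the "plus" copies,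
`false` the "minus" copies), with all arcs from `v` into each plus copy and all arcs from
each minus copy into `v`. -/
def attachTreesRel {V α : Type*} (D : Digraph' V) (T : Digraph' α) (ℓ : ℕ) :
    (V ⊕ (V × Fin ℓ × Bool × α)) → (V ⊕ (V × Fin ℓ × Bool × α)) → Prop
  | Sum.inl u, Sum.inl v => D.Adj u v
  | Sum.inl v, Sum.inr (w, _, b, _) => v = w ∧ b = true
  | Sum.inr (w, _, b, _), Sum.inl v => v = w ∧ b = false
  | Sum.inr (v, j, b, u), Sum.inr (v', j', b', u') => v = v' ∧ j = j' ∧ b = b' ∧ T.Adj u u'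

section AuxLemmas
variable {α : Type*}

lemma aux_mem_of_walk {G : SimpleGraph α} {S : Set α}
    (hS : ∀ a ∈ S, ∀ b, G.Adj a b → b ∈ S) :
    ∀ {u v : α}, G.Walk u v → u ∈ S → v ∈ S := by
  intro u v p
  induction p with
  | nil => exact id
  | cons h p ih => intro hu; exact ih (hS _ hu _ h)

lemma aux_crossing {G : SimpleGraph α} (hG : G.Preconnected) {S : Set α}
    {x y : α} (hx : x ∈ S) (hy : y ∉ S) : ∃ a ∈ S, ∃ b, b ∉ S ∧ G.Adj a b := by
  by_contra hcon
  push_neg at hcon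
  refine hy (aux_mem_of_walk (fun a ha b hab => ?_) (hG x y).some hx)
  by_contra hb
  exact (hcon a ha b hb) hab

lemma aux_exists_adj {G : SimpleGraph α} (hG : G.Preconnected) {x z : α} (hz : z ≠ x) :
    ∃ y, G.Adj x y := by
  obtain ⟨p⟩ := hG x z
  cases p with
  | nil => exact absurd rfl hz
  | cons h _ => exact ⟨_, h⟩

lemma aux_fin2 {a k : Fin 2} (h : a ≠ (if k = 0 then 1 else 0)) : a = k := by
  fin_cases a <;> fin_cases k <;> simp_all

lemma aux_no_dicycle {T : Digraph' α} (hac : T.underlying.IsAcyclic) :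
    ∀ v, ¬ Relation.TransGen T.Adj v v := by
  have key : ∀ u v, Relation.TransGen T.Adj u v →
      ∃ p : T.underlying.Walk u v, p.IsPath ∧ 0 < p.length ∧
        ∀ d ∈ p.darts, T.Adj d.fst d.snd := by
    intro u v h
    induction h using Relation.TransGen.head_induction_on with
    | single hadj =>
        rename_i a
        refine ⟨SimpleGraph.Walk.cons (show T.underlying.Adj a v from Or.inl hadj) SimpleGraph.Walk.nil, ?_, by simp, ?_⟩
        · rw [SimpleGraph.Walk.cons_isPath_iff]
          refine ⟨SimpleGraph.Walk.IsPath.nil, ?_⟩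
          have hne : a ≠ v := fun h => T.loopless _ (h ▸ hadj)
          simp [hne]
        · intro d hd
          simp only [SimpleGraph.Walk.darts_cons, SimpleGraph.Walk.darts_nil,
            List.mem_cons, List.not_mem_nil, or_false] at hd
          subst hd; exact hadj
    | head h' h ihp =>
        rename_i a c
        classical
        obtain ⟨p, hp, hlen, hfwd⟩ := ihp
        by_cases ha : a ∈ p.support
        · exfalso
          have hq := hp.takeUntil ha
          have hfq : ∀ d ∈ (p.takeUntil a ha).darts, T.Adj d.fst d.snd :=
            fun d hd => hfwd d (p.darts_takeUntil_subset ha hd)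
          have hea : T.underlying.Adj a c := Or.inl h'
          have he : (SimpleGraph.Walk.cons hea SimpleGraph.Walk.nil).IsPath := by
            rw [SimpleGraph.Walk.cons_isPath_iff]
            exact ⟨SimpleGraph.Walk.IsPath.nil, by simp [hea.ne]⟩
          have hpq := hac.path_unique ⟨SimpleGraph.Walk.cons hea SimpleGraph.Walk.nil, he⟩
            ⟨(p.takeUntil a ha).reverse, hq.reverse⟩
          have hwq : (p.takeUntil a ha) = SimpleGraph.Walk.cons hea.symm SimpleGraph.Walk.nil := by
            have h1 : SimpleGraph.Walk.cons hea SimpleGraph.Walk.nil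
                = (p.takeUntil a ha).reverse := congrArg Subtype.val hpq
            have h2 := congrArg SimpleGraph.Walk.reverse h1
            rw [SimpleGraph.Walk.reverse_reverse] at h2
            rw [← h2]
            simp [SimpleGraph.Walk.reverse_cons]
          have hmem : (⟨(c, a), hea.symm⟩ : T.underlying.Dart) ∈ (p.takeUntil a ha).darts := by
            rw [hwq]; simp
          exact T.asymm c a (hfq _ hmem) h'
        · refine ⟨SimpleGraph.Walk.cons (show T.underlying.Adj a c from Or.inl h') p, ?_, by simp, ?_⟩
          · rw [SimpleGraph.Walk.cons_isPath_iff]; exact ⟨hp, ha⟩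
          · intro d hd
            rw [SimpleGraph.Walk.darts_cons, List.mem_cons] at hd
            rcases hd with rfl | hd
            · exact h'
            · exact hfwd d hd
  intro v hv
  obtain ⟨p, hp, hlen, -⟩ := key v v hv
  cases p with
  | nil => simp at hlen
  | cons h q =>
      rw [SimpleGraph.Walk.cons_isPath_iff] at hp
      exact hp.2 q.end_mem_support

lemma aux_card_le_two [Fintype α] {x w : α} (h : ∀ z : α, z = x ∨ z = w) :
    Fintype.card α ≤ 2 := by
  classical
  have hsub : (Finset.univ : Finset α) ⊆ {x, w} := by
    intro z _
    rcases h z with rfl | rfl <;> simp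
  calc Fintype.card α = (Finset.univ : Finset α).card := (Finset.card_univ).symm
    _ ≤ ({x, w} : Finset α).card := Finset.card_le_card hsub
    _ ≤ 2 := Finset.card_insert_le _ _ |>.trans (by simp)

lemma aux_nbr_not_leaf [Fintype α] {T : Digraph' α} (hconn : T.underlying.Connected)
    (hcard : 3 ≤ Fintype.card α) {x w : α} (hxw : T.underlying.Adj x w)
    (hxleaf : IsLeaf T x) : ¬ IsLeaf T w := by
  intro hwleaf
  obtain ⟨w0, _, hu⟩ := hxleaf
  obtain ⟨x0, _, hu'⟩ := hwleaf
  have hx : ∀ y, T.underlying.Adj x y → y = w := fun y hy => (hu y hy).trans (hu w hxw).symm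
  have hw : ∀ y, T.underlying.Adj w y → y = x := fun y hy =>
    (hu' y hy).trans (hu' x hxw.symm).symm
  have hall : ∀ z : α, z = x ∨ z = w := by
    intro z
    have hz : z ∈ ({x, w} : Set α) := by
      refine aux_mem_of_walk (G := T.underlying) (S := {x, w}) ?_
        (hconn.preconnected x z).some (by simp)
      rintro a ha b hab
      rcases ha with rfl | rfl
      · exact Or.inr (hx b hab)
      · exact Or.inl (hw b hab)
    simpa using hz
  have := aux_card_le_two hall
  omega

lemma aux_cycle_refine {β : Type*} {r : β → β → Prop} {x : β}
    (h : Relation.TransGen r x x) :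
    Relation.TransGen (fun a b => r a b ∧ Relation.TransGen r b a) x x := by
  have key : ∀ {y : β} (h : Relation.TransGen r y x), Relation.TransGen r x y →
      Relation.TransGen (fun a b => r a b ∧ Relation.TransGen r b a) y x := by
    intro y h
    induction h using Relation.TransGen.head_induction_on with
    | single hr => exact fun hback => Relation.TransGen.single ⟨hr, hback⟩
    | head h' hcx ihp =>
        rename_i a c
        intro hback
        have h1 : Relation.TransGen r c a := hcx.trans hback
        exact Relation.TransGen.head ⟨h', h1⟩ (ihp (hback.tail h'))
  exact key h h

end AuxLemmas

/-- For an oriented tree `T` on at least `3` vertices with exactly `ℓ` leaves and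
`lrem T` the induced subdigraph on the non-leaves: the digraph `D'` obtained from a finite
digraph `D` by attaching `2ℓ` copies of `T` to each vertex as above admits a `T`-free
`2`-coloring iff `D` admits a `lrem T`-free `2`-coloring; and `D'` is acyclic iff `D` is. -/


theorem statement2 {V α : Type*} [Fintype V] [Fintype α]
    (T : Digraph' α) (hT : T.underlying.IsTree) (hcard : 3 ≤ Fintype.card α)
    (ℓ : ℕ) (hℓ : {v : α | IsLeaf T v}.ncard = ℓ)
    (D : Digraph' V)
    (D' : Digraph' (V ⊕ (V × Fin ℓ × Bool × α)))
    (hD' : ∀ x y, D'.Adj x y ↔ attachTreesRel D T ℓ x y) :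
    ((∃ c : (V ⊕ (V × Fin ℓ × Bool × α)) → Fin 2, IsFFreeColoring T D' c) ↔
        (∃ c : V → Fin 2, IsFFreeColoring (inducedSub T {v : α | ¬ IsLeaf T v}) D c)) ∧
      (D'.Acyclic ↔ D.Acyclic) := by
  classical
  have hconn : T.underlying.Connected := hT.1
  have hac : T.underlying.IsAcyclic := hT.2
  constructor
  · constructor
    · rintro ⟨c', hc'⟩
      refine ⟨fun v => c' (Sum.inl v), ?_⟩
      rintro ψ ⟨hinj, hind⟩ ⟨i, hmonoc⟩
      have hcardL : Nat.card ↥{v : α | IsLeaf T v} = ℓ := by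
        rw [Nat.card_coe_set_eq, hℓ]
      obtain ⟨e, he⟩ : ∃ e : ↥{v : α | IsLeaf T v} → Fin ℓ, Function.Injective e :=
        ⟨fun x => finCongr hcardL ((Finite.equivFin _) x),
          (finCongr hcardL).injective.comp (Finite.equivFin _).injective⟩
      have hWex : ∀ x : ↥{v : α | IsLeaf T v}, ∃ w, T.underlying.Adj x.1 w ∧
          (∀ y, T.underlying.Adj x.1 y → y = w) ∧ ¬ IsLeaf T w := by
        intro x
        obtain ⟨w, hw, hu⟩ := x.2
        exact ⟨w, hw, fun y hy => hu y hy, aux_nbr_not_leaf hconn hcard hw x.2⟩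
      choose Wf hW1 hW2 hWnl using hWex
      have hbex : ∀ x : ↥{v : α | IsLeaf T v}, ∃ b : Bool,
          (b = true ↔ T.Adj (Wf x) x.1) := by
        intro x
        by_cases h : T.Adj (Wf x) x.1
        · exact ⟨true, by simp [h]⟩
        · exact ⟨false, by simp [h]⟩
      choose bf hbf using hbex
      have hcopy : ∀ (v : V) (j : Fin ℓ) (bo : Bool), ∃ u : α,
          c' (Sum.inr (v, j, bo, u)) = i := by
        intro v j bo
        have hic : IsInducedCopy T D' (fun u => Sum.inr (v, j, bo, u)) := by
          constructor
          · intro a b h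
            simpa using h
          · intro a b
            rw [hD']
            simp [attachTreesRel]
        have hnm := hc' _ hic
        rw [Monochromatic] at hnm
        push_neg at hnm
        obtain ⟨u, hu⟩ := hnm (if i = 0 then 1 else 0)
        exact ⟨u, aux_fin2 hu⟩
      choose uf huf using hcopy
      refine hc' (fun x => if hx : IsLeaf T x then
          Sum.inr (ψ ⟨Wf ⟨x, hx⟩, hWnl ⟨x, hx⟩⟩, e ⟨x, hx⟩, bf ⟨x, hx⟩,
            uf (ψ ⟨Wf ⟨x, hx⟩, hWnl ⟨x, hx⟩⟩) (e ⟨x, hx⟩) (bf ⟨x, hx⟩))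
        else Sum.inl (ψ ⟨x, hx⟩)) ⟨?_, ?_⟩ ⟨i, ?_⟩
      · intro x y hxy
        dsimp only at hxy
        by_cases hx : IsLeaf T x <;> by_cases hy : IsLeaf T y
        · rw [dif_pos hx, dif_pos hy] at hxy
          simp only [Sum.inr.injEq, Prod.mk.injEq] at hxy
          exact congrArg Subtype.val (he hxy.2.1)
        · rw [dif_pos hx, dif_neg hy] at hxy
          simp at hxy
        · rw [dif_neg hx, dif_pos hy] at hxy
          simp at hxy
        · rw [dif_neg hx, dif_neg hy] at hxy
          simp only [Sum.inl.injEq] at hxy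
          exact congrArg Subtype.val (hinj hxy)
      · intro x y
        dsimp only
        by_cases hx : IsLeaf T x <;> by_cases hy : IsLeaf T y
        · rw [dif_pos hx, dif_pos hy, hD']
          simp only [attachTreesRel]
          constructor
          · rintro ⟨-, h2, -, h4⟩
            have hxy : x = y := congrArg Subtype.val (he h2)
            subst hxy
            exact absurd h4 (T.loopless _)
          · intro hadj
            exfalso
            have hyw : y = Wf ⟨x, hx⟩ := hW2 ⟨x, hx⟩ y (Or.inl hadj)
            exact hWnl ⟨x, hx⟩ (hyw ▸ hy)
        · rw [dif_pos hx, dif_neg hy, hD']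
          simp only [attachTreesRel]
          constructor
          · rintro ⟨h1, h2⟩
            have hyw : y = Wf ⟨x, hx⟩ := congrArg Subtype.val (hinj h1)
            have hbx : ¬ T.Adj (Wf ⟨x, hx⟩) x := by
              intro hT1
              rw [(hbf ⟨x, hx⟩).2 hT1] at h2
              simp at h2
            rcases hW1 ⟨x, hx⟩ with hT1 | hT2
            · rw [hyw]; exact hT1
            · exact absurd hT2 hbx
          · intro hadj
            have hyw : y = Wf ⟨x, hx⟩ := hW2 ⟨x, hx⟩ y (Or.inl hadj)
            refine ⟨congrArg ψ (Subtype.ext hyw), ?_⟩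
            have hnb : ¬ T.Adj (Wf ⟨x, hx⟩) x := by
              rw [← hyw]; exact T.asymm x y hadj
            cases hbfx : bf ⟨x, hx⟩
            · rfl
            · exact absurd ((hbf ⟨x, hx⟩).1 hbfx) hnb
        · rw [dif_neg hx, dif_pos hy, hD']
          simp only [attachTreesRel]
          constructor
          · rintro ⟨h1, h2⟩
            have hxw : x = Wf ⟨y, hy⟩ := congrArg Subtype.val (hinj h1)
            rw [hxw]
            exact (hbf ⟨y, hy⟩).1 h2
          · intro hadj
            have hxw : x = Wf ⟨y, hy⟩ := hW2 ⟨y, hy⟩ x (Or.inr hadj)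
            exact ⟨congrArg ψ (Subtype.ext hxw), (hbf ⟨y, hy⟩).2 (hxw ▸ hadj)⟩
        · rw [dif_neg hx, dif_neg hy, hD']
          simp only [attachTreesRel]
          exact hind ⟨x, hx⟩ ⟨y, hy⟩
      · intro x
        dsimp only
        by_cases hx : IsLeaf T x
        · rw [dif_pos hx]
          exact huf _ _ _
        · rw [dif_neg hx]
          exact hmonoc ⟨x, hx⟩
    · rintro ⟨c, hc⟩
      obtain ⟨u₀, u₁, hne01⟩ := Fintype.exists_pair_of_one_lt_card
        (show 1 < Fintype.card α by omega)
      refine ⟨Sum.elim c (fun p => if p.2.2.2 = u₀ then 0 else 1), ?_⟩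
      rintro φ ⟨hinj, hind⟩ ⟨i, hmonoc⟩
      by_cases hinlcase : ∃ x v, φ x = Sum.inl v
      · obtain ⟨x₀, v₀, hx₀⟩ := hinlcase
        have hNLinl : ∀ x : α, ¬ IsLeaf T x → ∃ w, φ x = Sum.inl w := by
          intro x hxnl
          by_contra hno
          push_neg at hno
          obtain ⟨p, hp⟩ : ∃ p, φ x = Sum.inr p := by
            cases hφx : φ x with
            | inl w => exact absurd hφx (hno w)
            | inr p => exact ⟨p, rfl⟩
          obtain ⟨v, j, bo, u⟩ := p
          have hxB : x ∈ {z : α | ∃ u', φ z = Sum.inr (v, j, bo, u')} := ⟨u, hp⟩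
          have hx₀B : x₀ ∉ {z : α | ∃ u', φ z = Sum.inr (v, j, bo, u')} := by
            rintro ⟨u', hu'⟩
            rw [hx₀] at hu'
            simp at hu'
          obtain ⟨a, haB, b2, hb2, hab⟩ := aux_crossing hconn.preconnected hxB hx₀B
          have hφb2 : φ b2 = Sum.inl v := by
            obtain ⟨ua, ha⟩ := haB
            rcases hab with hT1 | hT2
            · have hadj : D'.Adj (φ a) (φ b2) := (hind a b2).2 hT1
              cases hb : φ b2 with
              | inl w =>
                  rw [ha, hb, hD'] at hadj
                  simp only [attachTreesRel] at hadj
                  exact congrArg Sum.inl hadj.1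
              | inr q =>
                  obtain ⟨v', j', bo', u'⟩ := q
                  rw [ha, hb, hD'] at hadj
                  simp only [attachTreesRel] at hadj
                  obtain ⟨rfl, rfl, rfl, -⟩ := hadj
                  exact absurd ⟨u', hb⟩ hb2
            · have hadj : D'.Adj (φ b2) (φ a) := (hind b2 a).2 hT2
              cases hb : φ b2 with
              | inl w =>
                  rw [ha, hb, hD'] at hadj
                  simp only [attachTreesRel] at hadj
                  exact congrArg Sum.inl hadj.1
              | inr q =>
                  obtain ⟨v', j', bo', u'⟩ := q
                  rw [ha, hb, hD'] at hadj
                  simp only [attachTreesRel] at hadj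
                  obtain ⟨rfl, rfl, rfl, -⟩ := hadj
                  exact absurd ⟨u', hb⟩ hb2
          have hB2adj : ∀ m, m ∈ {z : α | ∃ u', φ z = Sum.inr (v, j, bo, u')} →
              T.underlying.Adj b2 m := by
            rintro m ⟨um, hm⟩
            cases bo with
            | true =>
                have hadj : D'.Adj (φ b2) (φ m) := by
                  rw [hφb2, hm, hD']
                  exact ⟨rfl, rfl⟩
                exact Or.inl ((hind b2 m).1 hadj)
            | false =>
                have hadj : D'.Adj (φ m) (φ b2) := by
                  rw [hφb2, hm, hD']
                  exact ⟨rfl, rfl⟩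
                exact Or.inr ((hind m b2).1 hadj)
          have huniq : ∀ z, T.underlying.Adj x z → z = b2 := by
            intro z hz
            cases hφz : φ z with
            | inl w =>
                have hwv : w = v := by
                  rcases hz with hT1 | hT2
                  · have hadj := (hind x z).2 hT1
                    rw [hp, hφz, hD'] at hadj
                    simp only [attachTreesRel] at hadj
                    exact hadj.1
                  · have hadj := (hind z x).2 hT2
                    rw [hp, hφz, hD'] at hadj
                    simp only [attachTreesRel] at hadj
                    exact hadj.1
                apply hinj
                rw [hφz, hφb2, hwv]
            | inr q =>
                obtain ⟨vz, jz, bz, uz⟩ := q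
                exfalso
                have hzB : z ∈ {z : α | ∃ u', φ z = Sum.inr (v, j, bo, u')} := by
                  rcases hz with hT1 | hT2
                  · have hadj := (hind x z).2 hT1
                    rw [hp, hφz, hD'] at hadj
                    simp only [attachTreesRel] at hadj
                    obtain ⟨rfl, rfl, rfl, -⟩ := hadj
                    exact ⟨uz, hφz⟩
                  · have hadj := (hind z x).2 hT2
                    rw [hp, hφz, hD'] at hadj
                    simp only [attachTreesRel] at hadj
                    obtain ⟨rfl, rfl, rfl, -⟩ := hadj
                    exact ⟨uz, hφz⟩
                have h1 : T.underlying.Adj b2 x := hB2adj x hxB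
                have h2 : T.underlying.Adj b2 z := hB2adj z hzB
                have hxb2 : x ≠ b2 := by
                  intro h
                  rw [h, hφb2] at hp
                  simp at hp
                have hzb2 : z ≠ b2 := by
                  intro h
                  rw [h, hφb2] at hφz
                  simp at hφz
                have hP1 : (SimpleGraph.Walk.cons h1.symm SimpleGraph.Walk.nil :
                    T.underlying.Walk x b2).IsPath := by
                  rw [SimpleGraph.Walk.cons_isPath_iff]
                  exact ⟨SimpleGraph.Walk.IsPath.nil, by simp [hxb2]⟩
                have hP2 : (SimpleGraph.Walk.cons hz
                    (SimpleGraph.Walk.cons h2.symm SimpleGraph.Walk.nil) :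
                    T.underlying.Walk x b2).IsPath := by
                  rw [SimpleGraph.Walk.cons_isPath_iff, SimpleGraph.Walk.cons_isPath_iff]
                  refine ⟨⟨SimpleGraph.Walk.IsPath.nil, by simp [hzb2]⟩, ?_⟩
                  simp [hz.ne, hxb2]
                have hpaths := hac.path_unique ⟨_, hP1⟩ ⟨_, hP2⟩
                have hlen := congrArg (fun q : T.underlying.Path x b2 => q.1.length) hpaths
                simp at hlen
          exact hxnl ⟨b2, (hB2adj x hxB).symm, huniq⟩
        choose ψf hψ using fun (w : ↥{v : α | ¬ IsLeaf T v}) => hNLinl w.1 w.2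
        refine hc ψf ⟨?_, ?_⟩ ⟨i, ?_⟩
        · intro a b h
          apply Subtype.ext
          apply hinj
          rw [hψ a, hψ b, h]
        · intro a b
          have hthis : D'.Adj (Sum.inl (ψf a)) (Sum.inl (ψf b)) ↔ T.Adj a.1 b.1 := by
            rw [← hψ a, ← hψ b]
            exact hind a.1 b.1
          rw [hD'] at hthis
          simp only [attachTreesRel] at hthis
          exact hthis
        · intro w
          have h := hmonoc w.1
          rw [hψ w] at h
          simpa using h
      · push_neg at hinlcase
        have hallr : ∀ x : α, ∃ p, φ x = Sum.inr p := by
          intro x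
          cases hφx : φ x with
          | inl w => exact absurd hφx (hinlcase x w)
          | inr p => exact ⟨p, rfl⟩
        have hα : Nonempty α := Fintype.card_pos_iff.mp (by omega)
        obtain ⟨x₀⟩ := hα
        obtain ⟨⟨v, j, bo, u⟩, hx₀⟩ := hallr x₀
        have hsame : ∀ x : α, ∃ u', φ x = Sum.inr (v, j, bo, u') := by
          intro x
          refine aux_mem_of_walk (G := T.underlying)
            (S := {z : α | ∃ u', φ z = Sum.inr (v, j, bo, u')}) ?_
            (hconn.preconnected x₀ x).some ⟨u, hx₀⟩
          rintro a ⟨ua, ha⟩ b hab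
          obtain ⟨⟨vb, jb, bb, ub⟩, hb⟩ := hallr b
          rcases hab with hT1 | hT2
          · have hadj : D'.Adj (φ a) (φ b) := (hind a b).2 hT1
            rw [ha, hb, hD'] at hadj
            simp only [attachTreesRel] at hadj
            obtain ⟨rfl, rfl, rfl, -⟩ := hadj
            exact ⟨ub, hb⟩
          · have hadj : D'.Adj (φ b) (φ a) := (hind b a).2 hT2
            rw [ha, hb, hD'] at hadj
            simp only [attachTreesRel] at hadj
            obtain ⟨rfl, rfl, rfl, -⟩ := hadj
            exact ⟨ub, hb⟩
        choose κ hκ using hsame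
        have hκinj : Function.Injective κ := by
          intro a b h
          apply hinj
          rw [hκ a, hκ b, h]
        obtain ⟨x0, hx0⟩ := (Finite.injective_iff_bijective.mp hκinj).2 u₀
        obtain ⟨x1, hx1⟩ := (Finite.injective_iff_bijective.mp hκinj).2 u₁
        have h0 := hmonoc x0
        have h1 := hmonoc x1
        rw [hκ x0, hx0] at h0
        rw [hκ x1, hx1] at h1
        simp only [Sum.elim_inr] at h0 h1
        simp only [if_true] at h0
        rw [if_neg (Ne.symm hne01)] at h1
        rw [← h0] at h1
        exact absurd h1 (by decide)
  · constructor
    · intro hD'ac v hv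
      exact hD'ac (Sum.inl v)
        (Relation.TransGen.lift Sum.inl (fun a b h => (hD' _ _).2 h) _ _ hv)
    · intro hDac z hz
      set lv : (V ⊕ (V × Fin ℓ × Bool × α)) → ℕ :=
        Sum.elim (fun _ => 1) (fun p => if p.2.2.1 then 2 else 0) with hlv
      have hmono : ∀ a b, D'.Adj a b → lv a ≤ lv b := by
        intro a b h
        rw [hD'] at h
        rcases a with u | ⟨w, j, bo, u⟩ <;> rcases b with v | ⟨w', j', bo', u'⟩ <;>
          simp only [attachTreesRel] at h
        · exact le_refl _
        · obtain ⟨-, rfl⟩ := h; simp [hlv]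
        · obtain ⟨-, rfl⟩ := h; simp [hlv]
        · obtain ⟨rfl, rfl, rfl, -⟩ := h; exact le_refl _
      have hmonoT : ∀ a b, Relation.TransGen D'.Adj a b → lv a ≤ lv b := by
        intro a b h
        induction h with
        | single h => exact hmono _ _ h
        | tail h1 h2 ih => exact le_trans ih (hmono _ _ h2)
      have hstepl : ∀ va b, D'.Adj (Sum.inl va) b →
          Relation.TransGen D'.Adj b (Sum.inl va) →
          ∃ vb, b = Sum.inl vb ∧ D.Adj va vb := by
        intro va b hadj hback
        rcases b with vb | ⟨w', j', bo', u'⟩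
        · rw [hD'] at hadj
          simp only [attachTreesRel] at hadj
          exact ⟨vb, rfl, hadj⟩
        · exfalso
          have h2 := hmonoT _ _ hback
          rw [hD'] at hadj
          simp only [attachTreesRel] at hadj
          obtain ⟨-, rfl⟩ := hadj
          simp [hlv] at h2
      have hstepr : ∀ w j bo u b, D'.Adj (Sum.inr (w, j, bo, u)) b →
          Relation.TransGen D'.Adj b (Sum.inr (w, j, bo, u)) →
          ∃ u', b = Sum.inr (w, j, bo, u') ∧ T.Adj u u' := by
        intro w j bo u b hadj hback
        rcases b with vb | ⟨w', j', bo', u'⟩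
        · exfalso
          have h2 := hmonoT _ _ hback
          rw [hD'] at hadj
          simp only [attachTreesRel] at hadj
          obtain ⟨-, rfl⟩ := hadj
          simp [hlv] at h2
        · rw [hD'] at hadj
          simp only [attachTreesRel] at hadj
          obtain ⟨rfl, rfl, rfl, hT'⟩ := hadj
          exact ⟨u', rfl, hT'⟩
      have hR := aux_cycle_refine hz
      rcases z with v | ⟨w, j, bo, u⟩
      · have key : ∀ a, Relation.TransGen
            (fun a b => D'.Adj a b ∧ Relation.TransGen D'.Adj b a) a (Sum.inl v) →
            ∀ va, a = Sum.inl va → Relation.TransGen D.Adj va v := by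
          intro a h
          induction h using Relation.TransGen.head_induction_on with
          | single hr =>
              rintro va rfl
              obtain ⟨vb, heq, hD1⟩ := hstepl va _ hr.1 hr.2
              obtain rfl : v = vb := by simpa using heq
              exact Relation.TransGen.single hD1
          | head h' h ihp =>
              rintro va rfl
              obtain ⟨vc, rfl, hD1⟩ := hstepl va _ h'.1 h'.2
              exact Relation.TransGen.head hD1 (ihp vc rfl)
        exact hDac v (key _ hR v rfl)
      · have key : ∀ a, Relation.TransGen
            (fun a b => D'.Adj a b ∧ Relation.TransGen D'.Adj b a) a (Sum.inr (w, j, bo, u)) →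
            ∀ u0, a = Sum.inr (w, j, bo, u0) → Relation.TransGen T.Adj u0 u := by
          intro a h
          induction h using Relation.TransGen.head_induction_on with
          | single hr =>
              rintro u0 rfl
              obtain ⟨u1, heq, hT1⟩ := hstepr w j bo u0 _ hr.1 hr.2
              obtain rfl : u = u1 := by simpa using heq
              exact Relation.TransGen.single hT1
          | head h' h ihp =>
              rintro u0 rfl
              obtain ⟨u1, rfl, hT1⟩ := hstepr w j bo u0 _ h'.1 h'.2
              exact Relation.TransGen.head hT1 (ihp u1 rfl)
        exact aux_no_dicycle hac u (key _ hR u rfl)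
end

section
/- Let n ≥ 4, let P be an oriented path on n vertices, and let lrem(P) be the oriented path on n−2 vertices obtained from P by deleting its two endpoints. Let O be a finite digraph such that (i) every 2-coloring c : V(O) → Fin 2 admits a monochromatic induced copy of P, and (ii) the underlying graph of O admits a proper 3-coloring. Let D be any finite digraph, and let D' be obtained from D by adding, for each vertex v of D, two disjoint new copies O⁺_v and O⁻_v of O together with all arcs (v,u) for u a vertex of O⁺_v and all arcs (u,v) for u a vertex of O⁻_v. Then D' admits a P-free 3-coloring if and only if D admits a lrem(P)-free 3-coloring. Moreover, if O is acyclic, then D' is acyclic if and only if D is acyclic. -/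
/-- The arc relation of the digraph `D'` obtained from `D` by adding, for each vertex `v` of
`D`, two disjoint copies of `O` (`true` the "plus" copy, `false` the "minus" copy), with all
arcs from `v` into the plus copy and all arcs from the minus copy into `v`. -/
def attachTwoRel {V ω : Type*} (D : Digraph' V) (O : Digraph' ω) :
    (V ⊕ (V × Bool × ω)) → (V ⊕ (V × Bool × ω)) → Prop
  | Sum.inl u, Sum.inl v => D.Adj u v
  | Sum.inl v, Sum.inr (w, b, _) => v = w ∧ b = true
  | Sum.inr (w, b, _), Sum.inl v => v = w ∧ b = false
  | Sum.inr (v, b, u), Sum.inr (v', b', u') => v = v' ∧ b = b' ∧ O.Adj u u'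

section Aux
variable {V ω : Type*} {D : Digraph' V} {O : Digraph' ω}

lemma atr_ll {u v} : attachTwoRel D O (Sum.inl u) (Sum.inl v) ↔ D.Adj u v := Iff.rfl
lemma atr_lr {v w b u} : attachTwoRel D O (Sum.inl v) (Sum.inr (w, b, u)) ↔ (v = w ∧ b = true) := Iff.rfl
lemma atr_rl {v w b u} : attachTwoRel D O (Sum.inr (w, b, u)) (Sum.inl v) ↔ (v = w ∧ b = false) := Iff.rfl
lemma atr_rr {v b u v' b' u'} : attachTwoRel D O (Sum.inr (v, b, u)) (Sum.inr (v', b', u')) ↔ (v = v' ∧ b = b' ∧ O.Adj u u') := Iff.rfl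

lemma plus_trap {v u y} (h : Relation.TransGen (attachTwoRel D O) (Sum.inr (v, true, u)) y) :
    ∃ u', y = Sum.inr (v, true, u') ∧ Relation.TransGen O.Adj u u' := by
  induction h with
  | @single y h =>
    rcases y with w | ⟨v', b', u'⟩
    · exact absurd (atr_rl.mp h).2 (by simp)
    · obtain ⟨h1, hb, ha⟩ := atr_rr.mp h
      exact ⟨u', by rw [← h1, ← hb], Relation.TransGen.single ha⟩
  | @tail y z t h ih =>
    obtain ⟨u', rfl, hu'⟩ := ih
    rcases z with w | ⟨v', b', u''⟩
    · exact absurd (atr_rl.mp h).2 (by simp)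
    · obtain ⟨h1, hb, ha⟩ := atr_rr.mp h
      exact ⟨u'', by rw [← h1, ← hb], hu'.tail ha⟩

lemma minus_trap {v u x} (h : Relation.TransGen (attachTwoRel D O) x (Sum.inr (v, false, u))) :
    ∃ u', x = Sum.inr (v, false, u') ∧ Relation.TransGen O.Adj u' u := by
  induction h using Relation.TransGen.head_induction_on with
  | @single x h =>
    rcases x with w | ⟨v', b', u'⟩
    · exact absurd (atr_lr.mp h).2 (by simp)
    · obtain ⟨h1, hb, ha⟩ := atr_rr.mp h
      exact ⟨u', by rw [h1, hb], Relation.TransGen.single ha⟩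
  | @head x y h t ih =>
    obtain ⟨u', hy, hu'⟩ := ih
    subst hy
    rcases x with w | ⟨v', b', u''⟩
    · exact absurd (atr_lr.mp h).2 (by simp)
    · obtain ⟨h1, hb, ha⟩ := atr_rr.mp h
      exact ⟨u'', by rw [h1, hb], (Relation.TransGen.single ha).trans hu'⟩

lemma inl_path {a b} (h : Relation.TransGen (attachTwoRel D O) (Sum.inl a) (Sum.inl b)) :
    Relation.TransGen D.Adj a b := by
  suffices H : ∀ y, Relation.TransGen (attachTwoRel D O) (Sum.inl a) y →
      ∀ b, y = Sum.inl b → Relation.TransGen D.Adj a b from H _ h b rfl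
  intro y h
  induction h with
  | @single y h =>
    intro b hb; subst hb
    exact Relation.TransGen.single (atr_ll.mp h)
  | @tail y z t h ih =>
    intro b hb; subst hb
    rcases y with c | ⟨w, bb, u⟩
    · exact (ih c rfl).tail (atr_ll.mp h)
    · have hbb := (atr_rl.mp h).2
      subst hbb
      obtain ⟨u', hx, _⟩ := minus_trap t
      exact absurd hx (by simp)
end Aux


lemma dir1 {n : ℕ} (hn : 4 ≤ n) (P : Digraph' (Fin n)) (hP : IsOrientedPath P)
    (Q : Digraph' (Fin (n - 2)))
    (hQ : ∀ i j : Fin (n - 2),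
      Q.Adj i j ↔ P.Adj ⟨i.val + 1, by have := i.isLt; clear hn; omega⟩
        ⟨j.val + 1, by have := j.isLt; clear hn; omega⟩)
    {ω : Type*} (O : Digraph' ω)
    (c₃ : ω → Fin 3) (hc₃ : ∀ u v : ω, O.underlying.Adj u v → c₃ u ≠ c₃ v)
    {V : Type*} (D : Digraph' V)
    (D' : Digraph' (V ⊕ (V × Bool × ω)))
    (hD' : ∀ x y, D'.Adj x y ↔ attachTwoRel D O x y)
    (c : V → Fin 3) (hc : IsFFreeColoring Q D c) :
    ∃ c' : (V ⊕ (V × Bool × ω)) → Fin 3, IsFFreeColoring P D' c' := by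
  refine ⟨Sum.elim c (fun p => c₃ p.2.2), ?_⟩
  rintro φ ⟨hinj, hadj⟩ ⟨i, hmono⟩
  have hP2' : ∀ i j : Fin n, i.val + 1 = j.val → P.Adj i j ∨ P.Adj j i := by
    intro i j hij
    have hlt : i.val + 1 < n := by have := j.isLt; omega
    have hj : j = ⟨i.val + 1, hlt⟩ := Fin.ext hij.symm
    subst hj
    exact hP.2 i hlt
  -- neighbors of a copy-vertex must be the base vertex
  have hnb : ∀ (k : Fin n) (v : V) (b : Bool) (u : ω), φ k = Sum.inr (v, b, u) →
      ∀ j : Fin n, (D'.Adj (φ j) (φ k) ∨ D'.Adj (φ k) (φ j)) → φ j = Sum.inl v := by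
    intro k v b u hk j hj
    cases hφj : φ j with
    | inl w =>
      rcases hj with hj | hj <;> rw [hD', hk, hφj] at hj
      · rw [(atr_lr.mp hj).1]
      · rw [(atr_rl.mp hj).1]
    | inr p =>
      obtain ⟨w, bb, uu⟩ := p
      exfalso
      have hci : c₃ uu = c₃ u := by
        have h1 := hmono j
        have h2 := hmono k
        rw [hφj] at h1
        rw [hk] at h2
        simp only [Sum.elim_inr] at h1 h2
        rw [h1, h2]
      rcases hj with hj | hj <;> rw [hD', hk, hφj] at hj
      · exact hc₃ uu u (Or.inl (atr_rr.mp hj).2.2) hci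
      · exact hc₃ uu u (Or.inr (atr_rr.mp hj).2.2) hci
  -- interior vertices land in `inl`
  have mid : ∀ k : Fin n, 1 ≤ k.val → k.val ≤ n - 2 → ∃ a, φ k = Sum.inl a := by
    intro k h1 h2
    cases hφk : φ k with
    | inl a => exact ⟨a, rfl⟩
    | inr p =>
      obtain ⟨v, b, u⟩ := p
      exfalso
      have hklt := k.isLt
      have e1 : φ ⟨k.val - 1, by omega⟩ = Sum.inl v := by
        apply hnb k v b u hφk
        rcases hP2' ⟨k.val - 1, by omega⟩ k (show k.val - 1 + 1 = k.val by omega) with h | h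
        · exact Or.inl ((hadj _ k).mpr h)
        · exact Or.inr ((hadj k _).mpr h)
      have e2 : φ ⟨k.val + 1, by omega⟩ = Sum.inl v := by
        apply hnb k v b u hφk
        rcases hP2' k ⟨k.val + 1, by omega⟩ (show k.val + 1 = k.val + 1 by omega) with h | h
        · exact Or.inr ((hadj k _).mpr h)
        · exact Or.inl ((hadj _ k).mpr h)
      have h12 : (⟨k.val - 1, by omega⟩ : Fin n) = ⟨k.val + 1, by omega⟩ :=
        hinj (by rw [e1, e2])
      have h13 : k.val - 1 = k.val + 1 := congrArg Fin.val h12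
      omega
  have mid' : ∀ j : Fin (n - 2), ∃ a, φ ⟨j.val + 1, by have := j.isLt; clear hn; omega⟩ = Sum.inl a := by
    intro j
    exact mid _ (Nat.le_add_left 1 j.val) (show j.val + 1 ≤ n - 2 by have := j.isLt; omega)
  choose ψ hψ using mid'
  refine hc ψ ⟨?_, ?_⟩ ⟨i, ?_⟩
  · intro j j' hjj
    have : φ ⟨j.val + 1, by have := j.isLt; clear hn; omega⟩ = φ ⟨j'.val + 1, by have := j'.isLt; clear hn; omega⟩ := by
      rw [hψ, hψ, hjj]
    have h2 : j.val + 1 = j'.val + 1 := congrArg Fin.val (hinj this)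
    exact Fin.ext (by omega)
  · intro j j'
    rw [hQ]
    rw [← hadj ⟨j.val + 1, by have := j.isLt; clear hn; omega⟩ ⟨j'.val + 1, by have := j'.isLt; clear hn; omega⟩,
      hψ, hψ, hD', atr_ll]
  · intro j
    have := hmono ⟨j.val + 1, by have := j.isLt; clear hn; omega⟩
    rw [hψ] at this
    simpa using this

lemma dir2 {n : ℕ} (hn : 4 ≤ n) (P : Digraph' (Fin n)) (hP : IsOrientedPath P)
    (Q : Digraph' (Fin (n - 2)))
    (hQ : ∀ i j : Fin (n - 2),
      Q.Adj i j ↔ P.Adj ⟨i.val + 1, by have := i.isLt; clear hn; omega⟩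
        ⟨j.val + 1, by have := j.isLt; clear hn; omega⟩)
    {ω : Type*} (O : Digraph' ω)
    (hO2 : ∀ c : ω → Fin 2, ∃ φ : Fin n → ω, IsInducedCopy P O φ ∧ Monochromatic c φ)
    {V : Type*} (D : Digraph' V)
    (D' : Digraph' (V ⊕ (V × Bool × ω)))
    (hD' : ∀ x y, D'.Adj x y ↔ attachTwoRel D O x y)
    (c' : (V ⊕ (V × Bool × ω)) → Fin 3) (hc' : IsFFreeColoring P D' c') :
    ∃ c : V → Fin 3, IsFFreeColoring Q D c := by
  classical
  have hP2' : ∀ i j : Fin n, i.val + 1 = j.val → P.Adj i j ∨ P.Adj j i := by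
    intro i j hij
    have hlt : i.val + 1 < n := by have := j.isLt; omega
    have hj : j = ⟨i.val + 1, hlt⟩ := Fin.ext hij.symm
    subst hj
    exact hP.2 i hlt
  have hQ' : ∀ (i : Fin (n - 2)) (a : Fin n), i.val + 1 = a.val →
      ∀ (j : Fin (n - 2)) (b : Fin n), j.val + 1 = b.val → (Q.Adj i j ↔ P.Adj a b) := by
    intro i a hia j b hjb
    have hlta : i.val + 1 < n := by have := a.isLt; omega
    have hltb : j.val + 1 < n := by have := b.isLt; omega
    have ha : a = ⟨i.val + 1, hlta⟩ := Fin.ext hia.symm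
    have hb : b = ⟨j.val + 1, hltb⟩ := Fin.ext hjb.symm
    subst ha; subst hb
    exact hQ i j
  -- every copy of O contains every color
  have allcolors : ∀ (v : V) (b : Bool) (i : Fin 3), ∃ u, c' (Sum.inr (v, b, u)) = i := by
    intro v b i
    by_contra hno
    push_neg at hno
    have hgex : ∃ g : Fin 2 → Fin 3, (∀ x, g x ≠ i) ∧ (∀ j, j ≠ i → ∃ x, g x = j) := by
      fin_cases i
      · exact ⟨![1, 2], by decide, by decide⟩
      · exact ⟨![0, 2], by decide, by decide⟩
      · exact ⟨![0, 1], by decide, by decide⟩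
    obtain ⟨g, hg1, hg2⟩ := hgex
    obtain ⟨φ₀, ⟨hinj₀, hadj₀⟩, ⟨x, hx⟩⟩ :=
      hO2 (fun u => if c' (Sum.inr (v, b, u)) = g 0 then 0 else 1)
    have hval : ∀ u : Fin n, c' (Sum.inr (v, b, φ₀ u)) = g x := by
      intro u
      have hxu : (if c' (Sum.inr (v, b, φ₀ u)) = g 0 then (0 : Fin 2) else 1) = x := hx u
      by_cases h : c' (Sum.inr (v, b, φ₀ u)) = g 0
      · rw [if_pos h] at hxu
        rw [← hxu]; exact h
      · rw [if_neg h] at hxu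
        obtain ⟨y, hy⟩ := hg2 _ (hno (φ₀ u))
        fin_cases y
        · exact absurd hy.symm h
        · rw [← hxu]; exact hy.symm
    refine hc' (fun u => Sum.inr (v, b, φ₀ u)) ⟨?_, ?_⟩ ⟨g x, hval⟩
    · intro a a' h
      apply hinj₀
      simpa using h
    · intro a a'
      rw [hD', atr_rr, hadj₀]
      simp
  -- the induced coloring of D
  refine ⟨fun v => c' (Sum.inl v), ?_⟩
  rintro ψ ⟨hinjψ, hadjψ⟩ ⟨i, hmono⟩
  have hn2 : 2 ≤ n - 2 := by omega
  set v0 : V := ψ ⟨0, by omega⟩ with hv0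
  set v1 : V := ψ ⟨n - 3, by omega⟩ with hv1
  have hv01 : v0 ≠ v1 := by
    intro h
    have := congrArg Fin.val (hinjψ h)
    simp at this
    omega
  have hb0 : ∃ b₀ : Bool, ((b₀ = false) ↔ P.Adj ⟨0, by omega⟩ ⟨1, by omega⟩) ∧
      ((b₀ = true) ↔ P.Adj ⟨1, by omega⟩ ⟨0, by omega⟩) := by
    rcases hP2' ⟨0, by omega⟩ ⟨1, by omega⟩ rfl with d | d
    · exact ⟨false, ⟨fun _ => d, fun _ => rfl⟩,
        ⟨by simp, fun h => absurd d (P.asymm _ _ h)⟩⟩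
    · exact ⟨true, ⟨by simp, fun h => absurd d (P.asymm _ _ h)⟩,
        ⟨fun _ => d, fun _ => rfl⟩⟩
  obtain ⟨b₀, hb0f, hb0t⟩ := hb0
  have hb1 : ∃ b₁ : Bool, ((b₁ = true) ↔ P.Adj ⟨n - 2, by omega⟩ ⟨n - 1, by omega⟩) ∧
      ((b₁ = false) ↔ P.Adj ⟨n - 1, by omega⟩ ⟨n - 2, by omega⟩) := by
    rcases hP2' ⟨n - 2, by omega⟩ ⟨n - 1, by omega⟩ (show n - 2 + 1 = n - 1 by omega)
      with d | d
    · exact ⟨true, ⟨fun _ => d, fun _ => rfl⟩,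
        ⟨by simp, fun h => absurd d (P.asymm _ _ h)⟩⟩
    · exact ⟨false, ⟨by simp, fun h => absurd d (P.asymm _ _ h)⟩,
        ⟨fun _ => d, fun _ => rfl⟩⟩
  obtain ⟨b₁, hb1t, hb1f⟩ := hb1
  obtain ⟨u₀, hu₀⟩ := allcolors v0 b₀ i
  obtain ⟨u₁, hu₁⟩ := allcolors v1 b₁ i
  set φ : Fin n → (V ⊕ (V × Bool × ω)) := fun k =>
    if h0 : k.val = 0 then Sum.inr (v0, b₀, u₀)
    else if h1 : k.val = n - 1 then Sum.inr (v1, b₁, u₁)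
    else Sum.inl (ψ ⟨k.val - 1, by have := k.isLt; omega⟩) with hφdef
  have hφ0 : ∀ k : Fin n, k.val = 0 → φ k = Sum.inr (v0, b₀, u₀) := by
    intro k hk; simp only [hφdef]; rw [dif_pos hk]
  have hφ3 : ∀ k : Fin n, k.val = n - 1 → φ k = Sum.inr (v1, b₁, u₁) := by
    intro k hk; simp only [hφdef]; rw [dif_neg (by omega), dif_pos hk]
  have hφm : ∀ (k : Fin n) (hk1 : 1 ≤ k.val) (hk2 : k.val ≤ n - 2),
      φ k = Sum.inl (ψ ⟨k.val - 1, by omega⟩) := by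
    intro k hk1 hk2; simp only [hφdef]; rw [dif_neg (by omega), dif_neg (by omega)]
  have tri : ∀ k : Fin n, k.val = 0 ∨ k.val = n - 1 ∨ (1 ≤ k.val ∧ k.val ≤ n - 2) :=
    fun k => by have := k.isLt; omega
  have hinjφ : Function.Injective φ := by
    intro a a' h
    rcases tri a with ha | ha | ha <;> rcases tri a' with ha' | ha' | ha'
    · exact Fin.ext (by omega)
    · rw [hφ0 a ha, hφ3 a' ha'] at h
      simp only [Sum.inr.injEq, Prod.mk.injEq] at h
      exact absurd h.1 hv01
    · rw [hφ0 a ha, hφm a' ha'.1 ha'.2] at h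
      simp at h
    · rw [hφ3 a ha, hφ0 a' ha'] at h
      simp only [Sum.inr.injEq, Prod.mk.injEq] at h
      exact absurd h.1.symm hv01
    · exact Fin.ext (by omega)
    · rw [hφ3 a ha, hφm a' ha'.1 ha'.2] at h
      simp at h
    · rw [hφm a ha.1 ha.2, hφ0 a' ha'] at h
      simp at h
    · rw [hφm a ha.1 ha.2, hφ3 a' ha'] at h
      simp at h
    · rw [hφm a ha.1 ha.2, hφm a' ha'.1 ha'.2] at h
      simp only [Sum.inl.injEq] at h
      have h2 : a.val - 1 = a'.val - 1 := congrArg Fin.val (hinjψ h)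
      exact Fin.ext (by omega)
  have hadjφ : ∀ a a' : Fin n, D'.Adj (φ a) (φ a') ↔ P.Adj a a' := by
    intro a a'
    rw [hD']
    rcases tri a with ha | ha | ha <;> rcases tri a' with ha' | ha' | ha'
    · -- (0,0)
      have heq : a = a' := Fin.ext (by omega)
      subst heq
      rw [hφ0 a ha, atr_rr]
      constructor
      · rintro ⟨-, -, h⟩; exact absurd h (O.loopless _)
      · intro h; exact absurd h (P.loopless _)
    · -- (0, n-1)
      rw [hφ0 a ha, hφ3 a' ha', atr_rr]
      constructor
      · rintro ⟨h, -⟩; exact absurd h hv01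
      · intro h; rcases hP.1 _ _ h with h' | h' <;> omega
    · -- (0, mid)
      rw [hφ0 a ha, hφm a' ha'.1 ha'.2, atr_rl]
      constructor
      · rintro ⟨h1, h2⟩
        have e1 : a'.val - 1 = 0 := congrArg Fin.val (hinjψ h1)
        have h0a : a = ⟨0, by omega⟩ := Fin.ext ha
        have ha1 : a' = ⟨1, by omega⟩ := Fin.ext (show a'.val = 1 by omega)
        rw [h0a, ha1]
        exact hb0f.mp h2
      · intro h
        have h1 : a'.val = 1 := by rcases hP.1 _ _ h with h' | h' <;> omega
        refine ⟨?_, ?_⟩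
        · rw [hv0]; congr 1; exact Fin.ext (show _ - 1 = 0 by omega)
        · apply hb0f.mpr
          have h0a : a = ⟨0, by omega⟩ := Fin.ext ha
          have ha1 : a' = ⟨1, by omega⟩ := Fin.ext (show a'.val = 1 by omega)
          rw [← h0a, ← ha1]; exact h
    · -- (n-1, 0)
      rw [hφ3 a ha, hφ0 a' ha', atr_rr]
      constructor
      · rintro ⟨h, -⟩; exact absurd h.symm hv01
      · intro h; rcases hP.1 _ _ h with h' | h' <;> omega
    · -- (n-1, n-1)
      have heq : a = a' := Fin.ext (by omega)
      subst heq
      rw [hφ3 a ha, atr_rr]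
      constructor
      · rintro ⟨-, -, h⟩; exact absurd h (O.loopless _)
      · intro h; exact absurd h (P.loopless _)
    · -- (n-1, mid)
      rw [hφ3 a ha, hφm a' ha'.1 ha'.2, atr_rl]
      constructor
      · rintro ⟨h1, h2⟩
        have e1 : a'.val - 1 = n - 3 := congrArg Fin.val (hinjψ h1)
        have h3a : a = ⟨n - 1, by omega⟩ := Fin.ext ha
        have ha2 : a' = ⟨n - 2, by omega⟩ := Fin.ext (show a'.val = n - 2 by omega)
        rw [h3a, ha2]
        exact hb1f.mp h2
      · intro h
        have h1 : a'.val = n - 2 := by rcases hP.1 _ _ h with h' | h' <;> omega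
        refine ⟨?_, ?_⟩
        · rw [hv1]; congr 1; exact Fin.ext (show _ - 1 = n - 3 by omega)
        · apply hb1f.mpr
          have h3a : a = ⟨n - 1, by omega⟩ := Fin.ext ha
          have ha2 : a' = ⟨n - 2, by omega⟩ := Fin.ext (show a'.val = n - 2 by omega)
          rw [← h3a, ← ha2]; exact h
    · -- (mid, 0)
      rw [hφm a ha.1 ha.2, hφ0 a' ha', atr_lr]
      constructor
      · rintro ⟨h1, h2⟩
        have e1 : a.val - 1 = 0 := congrArg Fin.val (hinjψ h1)
        have h0a : a' = ⟨0, by omega⟩ := Fin.ext ha'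
        have ha1 : a = ⟨1, by omega⟩ := Fin.ext (show a.val = 1 by omega)
        rw [h0a, ha1]
        exact hb0t.mp h2
      · intro h
        have h1 : a.val = 1 := by rcases hP.1 _ _ h with h' | h' <;> omega
        refine ⟨?_, ?_⟩
        · rw [hv0]; congr 1; exact Fin.ext (show _ - 1 = 0 by omega)
        · apply hb0t.mpr
          have h0a : a' = ⟨0, by omega⟩ := Fin.ext ha'
          have ha1 : a = ⟨1, by omega⟩ := Fin.ext (show a.val = 1 by omega)
          rw [← h0a, ← ha1]; exact h
    · -- (mid, n-1)
      rw [hφm a ha.1 ha.2, hφ3 a' ha', atr_lr]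
      constructor
      · rintro ⟨h1, h2⟩
        have e1 : a.val - 1 = n - 3 := congrArg Fin.val (hinjψ h1)
        have h3a : a' = ⟨n - 1, by omega⟩ := Fin.ext ha'
        have ha2 : a = ⟨n - 2, by omega⟩ := Fin.ext (show a.val = n - 2 by omega)
        rw [h3a, ha2]
        exact hb1t.mp h2
      · intro h
        have h1 : a.val = n - 2 := by rcases hP.1 _ _ h with h' | h' <;> omega
        refine ⟨?_, ?_⟩
        · rw [hv1]; congr 1; exact Fin.ext (show _ - 1 = n - 3 by omega)
        · apply hb1t.mpr
          have h3a : a' = ⟨n - 1, by omega⟩ := Fin.ext ha'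
          have ha2 : a = ⟨n - 2, by omega⟩ := Fin.ext (show a.val = n - 2 by omega)
          rw [← h3a, ← ha2]; exact h
    · -- (mid, mid)
      rw [hφm a ha.1 ha.2, hφm a' ha'.1 ha'.2, atr_ll, hadjψ]
      exact hQ' _ a (show a.val - 1 + 1 = a.val by omega)
        _ a' (show a'.val - 1 + 1 = a'.val by omega)
  refine hc' φ ⟨hinjφ, hadjφ⟩ ⟨i, ?_⟩
  intro u
  rcases tri u with h | h | h
  · rw [hφ0 u h]; exact hu₀
  · rw [hφ3 u h]; exact hu₁
  · rw [hφm u h.1 h.2]; exact hmono _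

/-- Let `n ≥ 4`, `P` an oriented path on `n` vertices and `Q = lrem P` the oriented path on
`n - 2` vertices obtained by deleting the two endpoints of `P`. Let `O` be a finite digraph
such that every `2`-coloring of `O` has a monochromatic induced copy of `P` and whose
underlying graph is properly `3`-colorable. Then the digraph `D'` obtained from a finite
digraph `D` by attaching two copies of `O` to each vertex as above admits a `P`-free
`3`-coloring iff `D` admits a `Q`-free `3`-coloring; moreover, if `O` is acyclic then `D'`
is acyclic iff `D` is. -/
theorem statement3 {n : ℕ} (hn : 4 ≤ n) (P : Digraph' (Fin n)) (hP : IsOrientedPath P)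
    (Q : Digraph' (Fin (n - 2)))
    (hQ : ∀ i j : Fin (n - 2),
      Q.Adj i j ↔ P.Adj ⟨i.val + 1, by have := i.isLt; omega⟩
        ⟨j.val + 1, by have := j.isLt; omega⟩)
    {ω : Type*} [Fintype ω] (O : Digraph' ω)
    (hO2 : ∀ c : ω → Fin 2, ∃ φ : Fin n → ω, IsInducedCopy P O φ ∧ Monochromatic c φ)
    (hO3 : ∃ c : ω → Fin 3, ∀ u v : ω, O.underlying.Adj u v → c u ≠ c v)
    {V : Type*} [Fintype V] (D : Digraph' V)
    (D' : Digraph' (V ⊕ (V × Bool × ω)))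
    (hD' : ∀ x y, D'.Adj x y ↔ attachTwoRel D O x y) :
    ((∃ c : (V ⊕ (V × Bool × ω)) → Fin 3, IsFFreeColoring P D' c) ↔
        (∃ c : V → Fin 3, IsFFreeColoring Q D c)) ∧
      (O.Acyclic → (D'.Acyclic ↔ D.Acyclic)) := by
  constructor
  · constructor
    · rintro ⟨c', hc'⟩
      exact dir2 hn P hP Q hQ O hO2 D D' hD' c' hc'
    · rintro ⟨c, hc⟩
      obtain ⟨c₃, hc₃⟩ := hO3
      exact dir1 hn P hP Q hQ O c₃ hc₃ D D' hD' c hc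
  · intro hOa
    constructor
    · intro hD'a v hv
      exact hD'a (Sum.inl v)
        (Relation.TransGen.lift Sum.inl (fun a b h => (hD' _ _).mpr h) _ _ hv)
    · intro hDa x hx
      have hx' : Relation.TransGen (attachTwoRel D O) x x :=
        Relation.TransGen.lift id (fun a b h => (hD' a b).mp h) _ _ hx
      match x with
      | Sum.inl a => exact hDa a (inl_path hx')
      | Sum.inr (v, true, u) =>
        obtain ⟨u', heq, hcyc⟩ := plus_trap hx'
        obtain ⟨-, -, rfl⟩ := by
          simpa only [Sum.inr.injEq, Prod.mk.injEq] using heq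
        exact hOa u hcyc
      | Sum.inr (v, false, u) =>
        obtain ⟨u', heq, hcyc⟩ := minus_trap hx'
        obtain ⟨-, -, rfl⟩ := by
          simpa only [Sum.inr.injEq, Prod.mk.injEq] using heq
        exact hOa u hcyc
end

section
/- Let P⃗₃ be the directed path on vertices {1,2,3} with arcs (1,2) and (2,3), and let P⃗₄ be the directed path on vertices {1,2,3,4} with arcs (1,2), (2,3) and (3,4). Let D be any finite digraph, and let D' be obtained from D by adding, for each vertex v of D, a disjoint new copy P₄^v of P⃗₄ together with all arcs (v,u) for u a vertex of P₄^v. Then D admits a P⃗₃-free 2-coloring if and only if D' admits a P⃗₄-free 2-coloring. Moreover, D' is acyclic if and only if D is acyclic. -/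
/-- The directed path on three vertices `0, 1, 2` with arcs `(0, 1)` and `(1, 2)`
(vertices `1,2,3` of the statement are `0,1,2` here). -/
def P3dir : Digraph' (Fin 3) where
  Adj u v := (u = 0 ∧ v = 1) ∨ (u = 1 ∧ v = 2)
  loopless := by decide
  asymm := by decide

/-- The directed path on four vertices `0, 1, 2, 3` with arcs `(0, 1)`, `(1, 2)` and
`(2, 3)` (vertices `1,2,3,4` of the statement are `0,1,2,3` here). -/
def P4dir : Digraph' (Fin 4) where
  Adj u v := (u = 0 ∧ v = 1) ∨ (u = 1 ∧ v = 2) ∨ (u = 2 ∧ v = 3)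
  loopless := by decide
  asymm := by decide

/-- The arc relation of the digraph `D'` obtained from `D` by adding, for each vertex `v` of
`D`, a disjoint copy of `O` together with all arcs `(v, u)` for `u` a vertex of that copy. -/
def attachPlusRel {V ω : Type*} (D : Digraph' V) (O : Digraph' ω) :
    (V ⊕ (V × ω)) → (V ⊕ (V × ω)) → Prop
  | Sum.inl u, Sum.inl v => D.Adj u v
  | Sum.inl v, Sum.inr (w, _) => v = w
  | Sum.inr _, Sum.inl _ => False
  | Sum.inr (v, u), Sum.inr (v', u') => v = v' ∧ O.Adj u u'

private instance : DecidableRel P3dir.Adj := fun u v =>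
  decidable_of_iff ((u = 0 ∧ v = 1) ∨ (u = 1 ∧ v = 2)) Iff.rfl

private instance : DecidableRel P4dir.Adj := fun u v =>
  decidable_of_iff ((u = 0 ∧ v = 1) ∨ (u = 1 ∧ v = 2) ∨ (u = 2 ∧ v = 3)) Iff.rfl

private lemma P4adj_lt : ∀ u v : Fin 4, P4dir.Adj u v → u < v := by decide

section AuxLemmas

variable {V : Type*} {D : Digraph' V} {D' : Digraph' (V ⊕ (V × Fin 4))}
  (hD' : ∀ x y, D'.Adj x y ↔ attachPlusRel D P4dir x y)

include hD'

private lemma aux_transgen_inl :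
    ∀ {x y}, Relation.TransGen D'.Adj x y → ∀ a b, x = Sum.inl a → y = Sum.inl b →
      Relation.TransGen D.Adj a b := by
  intro x y h
  induction h with
  | single h =>
    intro a b hx hy
    subst hx; subst hy
    exact Relation.TransGen.single ((hD' _ _).mp h)
  | @tail m y h' hstep ih =>
    intro a b hx hy
    subst hx; subst hy
    cases m with
    | inl c => exact (ih a c rfl rfl).tail ((hD' _ _).mp hstep)
    | inr p =>
      obtain ⟨pv, pu⟩ := p
      exact ((hD' _ _).mp hstep : False).elim

private lemma aux_transgen_inr :
    ∀ {x y}, Relation.TransGen D'.Adj x y → ∀ p, x = Sum.inr p →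
      ∃ q, y = Sum.inr q ∧ p.1 = q.1 ∧ p.2 < q.2 := by
  intro x y h
  induction h with
  | @single y h =>
    intro p hx
    subst hx
    obtain ⟨pv, pu⟩ := p
    cases y with
    | inl b => exact ((hD' _ _).mp h : False).elim
    | inr q =>
      obtain ⟨qv, qu⟩ := q
      obtain ⟨h1, h2⟩ := ((hD' _ _).mp h : pv = qv ∧ P4dir.Adj pu qu)
      exact ⟨(qv, qu), rfl, h1, P4adj_lt _ _ h2⟩
  | @tail m y h' hstep ih =>
    intro p hx
    obtain ⟨q, hm, h1, h2⟩ := ih p hx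
    subst hm
    obtain ⟨qv, qu⟩ := q
    cases y with
    | inl b => exact ((hD' _ _).mp hstep : False).elim
    | inr r =>
      obtain ⟨rv, ru⟩ := r
      obtain ⟨h3, h4⟩ := ((hD' _ _).mp hstep : qv = rv ∧ P4dir.Adj qu ru)
      exact ⟨(rv, ru), rfl, h1.trans h3, lt_trans h2 (P4adj_lt _ _ h4)⟩

private lemma aux_transgen_lift {a b : V} (h : Relation.TransGen D.Adj a b) :
    Relation.TransGen D'.Adj (Sum.inl a) (Sum.inl b) := by
  induction h with
  | single h => exact Relation.TransGen.single ((hD' _ _).mpr h)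
  | tail h' hstep ih => exact ih.tail ((hD' _ _).mpr hstep)

private lemma aux_forward (c : V → Fin 2) (hc : IsFFreeColoring P3dir D c) :
    IsFFreeColoring P4dir D' (Sum.elim c (fun p => ![0, 1, 0, 1] p.2)) := by
  rintro φ ⟨hinj, hadj⟩ ⟨i, hmono⟩
  have arc : ∀ u w : Fin 4, P4dir.Adj u w → attachPlusRel D P4dir (φ u) (φ w) :=
    fun u w h => (hD' _ _).mp ((hadj u w).mpr h)
  have noarc : ∀ u w : Fin 4, attachPlusRel D P4dir (φ u) (φ w) → P4dir.Adj u w :=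
    fun u w h => (hadj u w).mp ((hD' _ _).mpr h)
  rcases h0 : φ 0 with v0 | ⟨v, a0⟩
  · rcases h1 : φ 1 with v1 | ⟨w1, b1⟩
    · rcases h2 : φ 2 with v2 | ⟨w2, b2⟩
      · -- φ 0, φ 1, φ 2 are all in `V`: extract a monochromatic induced P3
        have hcast : ∀ k : Fin 3, φ (![0, 1, 2] k) = Sum.inl (![v0, v1, v2] k) := by
          intro k; fin_cases k <;> simp [h0, h1, h2]
        have einj : Function.Injective (![0, 1, 2] : Fin 3 → Fin 4) := by decide
        have hP34 : ∀ u w : Fin 3,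
            P4dir.Adj (![0, 1, 2] u) (![0, 1, 2] w) ↔ P3dir.Adj u w := by decide
        refine hc ![v0, v1, v2] ⟨?_, ?_⟩ ⟨i, ?_⟩
        · intro u w h
          apply einj
          apply hinj
          rw [hcast u, hcast w, h]
        · intro u w
          have h := hadj (![0, 1, 2] u) (![0, 1, 2] w)
          rw [hD', hcast u, hcast w] at h
          rw [← hP34 u w]
          exact h
        · intro u
          have h := hmono (![0, 1, 2] u)
          rw [hcast u] at h
          simpa using h
      · -- φ 0, φ 1 in V, φ 2 in a gadget
        have a12 : v1 = w2 := by
          have h := arc 1 2 (by decide); rw [h1, h2] at h; exact h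
        rcases h3 : φ 3 with v3 | ⟨w3, b3⟩
        · have h := arc 2 3 (by decide)
          rw [h2, h3] at h
          exact (h : False).elim
        · have a23 : w2 = w3 := by
            have h := arc 2 3 (by decide); rw [h2, h3] at h; exact h.1
          have : P4dir.Adj 1 3 := by
            apply noarc
            rw [h1, h3]
            exact show v1 = w3 from a12.trans a23
          exact absurd this (by decide)
    · -- φ 0 in V, φ 1 in a gadget
      have a01 : v0 = w1 := by
        have h := arc 0 1 (by decide); rw [h0, h1] at h; exact h
      rcases h2 : φ 2 with v2 | ⟨w2, b2⟩
      · have h := arc 1 2 (by decide)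
        rw [h1, h2] at h
        exact (h : False).elim
      · have a12 : w1 = w2 := by
          have h := arc 1 2 (by decide); rw [h1, h2] at h; exact h.1
        have : P4dir.Adj 0 2 := by
          apply noarc
          rw [h0, h2]
          exact show v0 = w2 from a01.trans a12
        exact absurd this (by decide)
  · -- φ 0 in a gadget: everything stays in the same gadget
    have step : ∀ u w : Fin 4, P4dir.Adj u w → ∀ x a, φ u = Sum.inr (x, a) →
        ∃ b, φ w = Sum.inr (x, b) := by
      intro u w h x a hx
      rcases hw : φ w with vw | ⟨xw, bw⟩
      · have h' := arc u w h
        rw [hx, hw] at h'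
        exact (h' : False).elim
      · have h' := arc u w h
        rw [hx, hw] at h'
        exact ⟨bw, by rw [(h' : x = xw ∧ P4dir.Adj a bw).1]⟩
    obtain ⟨b1, h1⟩ := step 0 1 (by decide) v a0 h0
    obtain ⟨b2, h2⟩ := step 1 2 (by decide) v b1 h1
    obtain ⟨b3, h3⟩ := step 2 3 (by decide) v b2 h2
    have hψ : ∀ k : Fin 4, φ k = Sum.inr (v, ![a0, b1, b2, b3] k) := by
      intro k; fin_cases k <;> simp [h0, h1, h2, h3]
    have hψinj : Function.Injective (![a0, b1, b2, b3] : Fin 4 → Fin 4) := by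
      intro u w h
      apply hinj
      rw [hψ u, hψ w, h]
    have hsurj := Finite.injective_iff_surjective.mp hψinj
    obtain ⟨k0, hk0⟩ := hsurj 0
    obtain ⟨k1, hk1⟩ := hsurj 1
    have m0 := hmono k0
    have m1 := hmono k1
    rw [hψ k0, hk0] at m0
    rw [hψ k1, hk1] at m1
    simp at m0 m1
    rw [← m0] at m1
    exact absurd m1 (by decide)

private lemma aux_backward (c' : (V ⊕ (V × Fin 4)) → Fin 2)
    (hc' : IsFFreeColoring P4dir D' c') :
    IsFFreeColoring P3dir D (fun v => c' (Sum.inl v)) := by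
  rintro ψ ⟨hinj, hadj⟩ ⟨i, hmono⟩
  have gadget : ∀ w : V, IsInducedCopy P4dir D' (fun u => Sum.inr (w, u)) := by
    intro w
    constructor
    · intro a b h
      simpa using h
    · intro a b
      rw [hD']
      show (w = w ∧ P4dir.Adj a b) ↔ _
      simp
  have hex : ∃ u : Fin 4, c' (Sum.inr (ψ 2, u)) = i := by
    by_contra hno
    push_neg at hno
    apply hc' _ (gadget (ψ 2))
    refine ⟨c' (Sum.inr (ψ 2, 0)), fun u => ?_⟩
    have htwo : ∀ x y j : Fin 2, x ≠ j → y ≠ j → x = y := by decide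
    exact htwo _ _ i (hno u) (hno 0)
  obtain ⟨u0, hu0⟩ := hex
  have hne : ∀ a b : Fin 3, a ≠ b → ψ a ≠ ψ b := fun a b hab h => hab (hinj h)
  refine hc' ![Sum.inl (ψ 0), Sum.inl (ψ 1), Sum.inl (ψ 2), Sum.inr (ψ 2, u0)]
    ⟨?_, ?_⟩ ⟨i, ?_⟩
  · intro a b h
    fin_cases a <;> fin_cases b <;> simp_all
  · intro a b
    rw [hD']
    have hD3 := hadj
    fin_cases a <;> fin_cases b <;> simp [attachPlusRel] <;>
      first
        | decide
        | (rw [hD3]; decide)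
        | exact iff_of_false (hne 0 2 (by decide)) (by decide)
        | exact iff_of_false (hne 1 2 (by decide)) (by decide)
        | exact iff_of_false (P4dir.loopless u0) (by decide)
  · intro u
    fin_cases u <;> simp [hmono 0, hmono 1, hmono 2, hu0]

end AuxLemmas

/-- `D` admits a `P⃗₃`-free `2`-coloring iff the digraph `D'`, obtained from `D` by attaching
to each vertex `v` a copy of `P⃗₄` dominated by `v`, admits a `P⃗₄`-free `2`-coloring;
moreover `D'` is acyclic iff `D` is. -/
theorem statement5 {V : Type*} [Fintype V] (D : Digraph' V)
    (D' : Digraph' (V ⊕ (V × Fin 4)))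
    (hD' : ∀ x y, D'.Adj x y ↔ attachPlusRel D P4dir x y) :
    ((∃ c : V → Fin 2, IsFFreeColoring P3dir D c) ↔
        (∃ c : (V ⊕ (V × Fin 4)) → Fin 2, IsFFreeColoring P4dir D' c)) ∧
      (D'.Acyclic ↔ D.Acyclic) := by
  constructor
  · constructor
    · rintro ⟨c, hc⟩
      exact ⟨_, aux_forward hD' c hc⟩
    · rintro ⟨c', hc'⟩
      exact ⟨_, aux_backward hD' c' hc'⟩
  · constructor
    · intro h v hv
      exact h (Sum.inl v) (aux_transgen_lift hD' hv)
    · intro h x hx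
      cases x with
      | inl a => exact h a (aux_transgen_inl hD' hx a a rfl rfl)
      | inr p =>
        obtain ⟨q, hq, -, hlt⟩ := aux_transgen_inr hD' hx p rfl
        obtain rfl : p = q := Sum.inr.inj hq
        exact absurd hlt (lt_irrefl _)
end

section
/- Let P⃗₃ be the directed path on vertices {1,2,3} with arcs (1,2) and (2,3). Let O be a finite digraph such that (i) every 2-coloring c : V(O) → Fin 2 admits a monochromatic induced copy of P⃗₃, and (ii) for every color i ∈ Fin 3 there exists a P⃗₃-free 3-coloring of O in which exactly one vertex of O receives color i. Let D be any finite digraph, and let D' be obtained from D by adding, for each vertex v of D, a disjoint new copy O_v of O together with all arcs (u,v) for u a vertex of O_v. Then the underlying graph of D admits a proper 3-coloring if and only if D' admits a P⃗₃-free 3-coloring. -/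
/-- The arc relation of the digraph `D'` obtained from `D` by adding, for each vertex `v` of
`D`, a disjoint copy of `O` together with all arcs `(u, v)` for `u` a vertex of that copy. -/
def attachMinusRel {V ω : Type*} (D : Digraph' V) (O : Digraph' ω) :
    (V ⊕ (V × ω)) → (V ⊕ (V × ω)) → Prop
  | Sum.inl u, Sum.inl v => D.Adj u v
  | Sum.inl _, Sum.inr _ => False
  | Sum.inr (w, _), Sum.inl v => v = w
  | Sum.inr (v, u), Sum.inr (v', u') => v = v' ∧ O.Adj u u'

/-- Let `O` be a finite digraph such that every `2`-coloring of `O` has a monochromatic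
induced copy of `P⃗₃`, and for every color `i` there is a `P⃗₃`-free `3`-coloring of `O` with
exactly one vertex of color `i`. Then the underlying graph of a finite digraph `D` is
properly `3`-colorable iff the digraph `D'`, obtained from `D` by attaching to each vertex
`v` a copy of `O` dominating `v`, admits a `P⃗₃`-free `3`-coloring. -/
theorem statement7 {V ω : Type*} [Fintype V] [Fintype ω]
    (O : Digraph' ω)
    (hO2 : ∀ c : ω → Fin 2, ∃ φ : Fin 3 → ω, IsInducedCopy P3dir O φ ∧ Monochromatic c φ)
    (hO3 : ∀ i : Fin 3, ∃ c : ω → Fin 3,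
      IsFFreeColoring P3dir O c ∧ ∃! x : ω, c x = i)
    (D : Digraph' V)
    (D' : Digraph' (V ⊕ (V × ω)))
    (hD' : ∀ x y, D'.Adj x y ↔ attachMinusRel D O x y) :
    (∃ c : V → Fin 3, ∀ u v : V, D.underlying.Adj u v → c u ≠ c v) ↔
      (∃ c : (V ⊕ (V × ω)) → Fin 3, IsFFreeColoring P3dir D' c) := by
  constructor
  · rintro ⟨c, hc⟩
    obtain ⟨c₀, hc₀, -⟩ := hO3 0
    refine ⟨Sum.elim c (fun p => c₀ p.2), ?_⟩
    rintro φ ⟨hinj, hiff⟩ ⟨i, hmono⟩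
    have a01 : D'.Adj (φ 0) (φ 1) := (hiff 0 1).mpr (by simp [P3dir])
    have a12 : D'.Adj (φ 1) (φ 2) := (hiff 1 2).mpr (by simp [P3dir])
    have na02 : ¬ D'.Adj (φ 0) (φ 2) := fun h => by
      have := (hiff 0 2).mp h
      simp [P3dir] at this
    rw [hD'] at a01 a12 na02
    rcases h1 : φ 1 with w | ⟨v', u'⟩
    · rw [h1] at a01 a12
      rcases h2 : φ 2 with w' | p
      · rw [h2] at a12
        simp only [attachMinusRel] at a12
        have hne := hc w w' (Or.inl a12)
        have e1 := hmono 1; have e2 := hmono 2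
        rw [h1] at e1; rw [h2] at e2
        simp only [Sum.elim_inl] at e1 e2
        exact hne (e1.trans e2.symm)
      · rw [h2] at a12
        simp only [attachMinusRel] at a12
    · rcases h0 : φ 0 with w | ⟨v, u⟩
      · rw [h0, h1] at a01
        simp only [attachMinusRel] at a01
      · rw [h0, h1] at a01
        simp only [attachMinusRel] at a01
        obtain ⟨hv1, hadj1⟩ := a01
        subst hv1
        rcases h2 : φ 2 with w' | ⟨v'', u''⟩
        · rw [h1, h2] at a12
          simp only [attachMinusRel] at a12
          rw [h0, h2] at na02
          simp only [attachMinusRel] at na02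
          exact na02 a12
        · rw [h1, h2] at a12
          simp only [attachMinusRel] at a12
          obtain ⟨hv2, hadj2⟩ := a12
          subst hv2
          refine hc₀ ![u, u', u''] ⟨?_, ?_⟩ ⟨i, ?_⟩
          · have hφ : ∀ j : Fin 3, φ j = Sum.inr (v, ![u, u', u''] j) := by
              intro j
              fin_cases j <;> simp [h0, h1, h2]
            intro x y hxy
            apply hinj
            rw [hφ x, hφ y, hxy]
          · intro x y
            have hφ : ∀ j : Fin 3, φ j = Sum.inr (v, ![u, u', u''] j) := by
              intro j
              fin_cases j <;> simp [h0, h1, h2]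
            have := hiff x y
            rw [hφ x, hφ y, hD'] at this
            simpa [attachMinusRel] using this
          · intro x
            have hφ : ∀ j : Fin 3, φ j = Sum.inr (v, ![u, u', u''] j) := by
              intro j
              fin_cases j <;> simp [h0, h1, h2]
            have := hmono x
            rw [hφ x] at this
            simpa using this
  · rintro ⟨c', hfree⟩
    have key : ∀ a b : V, D.Adj a b → c' (Sum.inl a) ≠ c' (Sum.inl b) := by
      intro a b hab heq
      set i := c' (Sum.inl a) with hi
      have hne : a ≠ b := fun h => D.loopless a (h ▸ hab)
      have hnba : ¬ D.Adj b a := D.asymm a b hab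
      by_cases hex : ∃ w : ω, c' (Sum.inr (a, w)) = i
      · obtain ⟨w, hw⟩ := hex
        refine hfree ![Sum.inr (a, w), Sum.inl a, Sum.inl b] ⟨?_, ?_⟩ ⟨i, ?_⟩
        · intro x y hxy
          fin_cases x <;> fin_cases y <;> simp_all
        · intro x y
          fin_cases x <;> fin_cases y <;>
            simp [hD', attachMinusRel, P3dir, hab, hne, hne.symm, hnba,
              D.loopless, O.loopless]
        · intro x
          fin_cases x <;> simp [hw, ← hi, ← heq]
      · push_neg at hex
        set d : ω → Fin 2 := fun w => if c' (Sum.inr (a, w)) = i + 1 then 0 else 1 with hd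
        obtain ⟨ψ, ⟨hψinj, hψiff⟩, j, hjmono⟩ := hO2 d
        have hsame : ∀ k : Fin 3, c' (Sum.inr (a, ψ k)) = c' (Sum.inr (a, ψ 0)) := by
          intro k
          have hdk : d (ψ k) = d (ψ 0) := (hjmono k).trans (hjmono 0).symm
          have hiff3 : (c' (Sum.inr (a, ψ k)) = i + 1) ↔ (c' (Sum.inr (a, ψ 0)) = i + 1) := by
            by_cases h1 : c' (Sum.inr (a, ψ k)) = i + 1 <;>
              by_cases h2 : c' (Sum.inr (a, ψ 0)) = i + 1 <;>
              simp [hd, h1, h2] at hdk ⊢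
          have key3 : ∀ (i x y : Fin 3), x ≠ i → y ≠ i → ((x = i + 1) ↔ (y = i + 1)) → x = y := by
            decide
          exact key3 i _ _ (hex (ψ k)) (hex (ψ 0)) hiff3
        refine hfree (fun k => Sum.inr (a, ψ k)) ⟨?_, ?_⟩ ⟨c' (Sum.inr (a, ψ 0)), hsame⟩
        · intro x y hxy
          apply hψinj
          simpa using hxy
        · intro x y
          rw [hD']
          simpa [attachMinusRel] using hψiff x y
    refine ⟨fun v => c' (Sum.inl v), ?_⟩
    intro u v huv
    rcases huv with h | h
    · exact key u v h
    · exact (key v u h).symm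
end

section
/- Let T be an oriented tree on at least 3 vertices with exactly ℓ leaves, and let R = lrem(T) be the induced subdigraph of T on its non-leaf vertices. Let T̂ be the digraph obtained from R by adding, for each vertex r of R, 2ℓ new vertices r⁺₁,…,r⁺_ℓ, r⁻₁,…,r⁻_ℓ together with the arcs (r, r⁺_j) and (r⁻_j, r) for j = 1,…,ℓ (and no other arcs). Then T̂ contains an induced copy of T. -/
/-- The arc relation of the digraph `T̂` obtained from `lrem T` (the induced subdigraph of
`T` on its non-leaf vertices) by adding, for each non-leaf vertex `r`, `2ℓ` new pendant
vertices: `ℓ` out-neighbors `r⁺₁, …, r⁺_ℓ` (flag `true`) and `ℓ` in-neighbors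
`r⁻₁, …, r⁻_ℓ` (flag `false`), with arcs `(r, r⁺_j)` and `(r⁻_j, r)` only. -/
def hatRel {α : Type*} (T : Digraph' α) (ℓ : ℕ) :
    ({v : α // ¬ IsLeaf T v} ⊕ ({v : α // ¬ IsLeaf T v} × Fin ℓ × Bool)) →
      ({v : α // ¬ IsLeaf T v} ⊕ ({v : α // ¬ IsLeaf T v} × Fin ℓ × Bool)) → Prop
  | Sum.inl u, Sum.inl v => T.Adj u.1 v.1
  | Sum.inl r, Sum.inr (r', _, b) => r = r' ∧ b = true
  | Sum.inr (r', _, b), Sum.inl r => r = r' ∧ b = false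
  | Sum.inr _, Sum.inr _ => False

/-- If `T` is an oriented tree on at least `3` vertices with exactly `ℓ` leaves, then the
digraph `T̂` described by `hatRel` contains an induced copy of `T`. -/
theorem statement11 {α : Type*} [Fintype α]
    (T : Digraph' α) (hT : T.underlying.IsTree) (hcard : 3 ≤ Fintype.card α)
    (ℓ : ℕ) (hℓ : {v : α | IsLeaf T v}.ncard = ℓ)
    (That : Digraph'
      ({v : α // ¬ IsLeaf T v} ⊕ ({v : α // ¬ IsLeaf T v} × Fin ℓ × Bool)))
    (hThat : ∀ x y, That.Adj x y ↔ hatRel T ℓ x y) :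
    ∃ φ : α → ({v : α // ¬ IsLeaf T v} ⊕ ({v : α // ¬ IsLeaf T v} × Fin ℓ × Bool)),
      IsInducedCopy T That φ := by
  classical
  -- A leaf's neighbor is not a leaf.
  have key : ∀ v w : α, IsLeaf T v → T.underlying.Adj v w → ¬ IsLeaf T w := by
    intro v w hv hvw hw
    obtain ⟨w', hw', hvu⟩ := hv
    obtain ⟨v', hv', hwu⟩ := hw
    have hreach : ∀ x : α, x = v ∨ x = w := by
      intro x
      have hr : T.underlying.Reachable v x := hT.isConnected.preconnected v x
      rw [SimpleGraph.reachable_iff_reflTransGen] at hr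
      induction hr with
      | refl => left; rfl
      | tail hab hbc ih =>
        rcases ih with rfl | rfl
        · right; rw [hvu _ hbc, ← hvu _ hvw]
        · left; rw [hwu _ hbc, ← hwu _ hvw.symm]
    have hsub : (Finset.univ : Finset α) ⊆ {v, w} := fun x _ => by
      rcases hreach x with rfl | rfl <;> simp
    have h2 := Finset.card_le_card hsub
    have h3 : ({v, w} : Finset α).card ≤ 2 := Finset.card_insert_le _ _ |>.trans (by simp)
    simp [Finset.card_univ] at h2
    omega
  have hcardleaf : Fintype.card {v : α // IsLeaf T v} = ℓ := by
    rw [← hℓ, Set.ncard_eq_toFinset_card']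
    rw [Set.toFinset_card]
    exact Fintype.card_congr (Equiv.setCongr rfl)
  let e : {v : α // IsLeaf T v} ≃ Fin ℓ := Fintype.equivFinOfCardEq hcardleaf
  -- neighbor of a leaf
  let nbr : ∀ v : α, IsLeaf T v → α := fun v h => h.choose
  have hnbr_adj : ∀ v h, T.underlying.Adj v (nbr v h) := fun v h => h.choose_spec.1
  have hnbr_uniq : ∀ v h, ∀ y, T.underlying.Adj v y → y = nbr v h :=
    fun v h y hy => h.choose_spec.2 y hy
  have hnbr_nl : ∀ v h, ¬ IsLeaf T (nbr v h) := fun v h => key v _ h (hnbr_adj v h)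
  let φ : α → ({v : α // ¬ IsLeaf T v} ⊕ ({v : α // ¬ IsLeaf T v} × Fin ℓ × Bool)) :=
    fun v => if h : IsLeaf T v then
      Sum.inr (⟨nbr v h, hnbr_nl v h⟩, e ⟨v, h⟩, if T.Adj (nbr v h) v then true else false)
    else Sum.inl ⟨v, h⟩
  refine ⟨φ, ?_, ?_⟩
  · intro u v huv
    by_cases hu : IsLeaf T u <;> by_cases hv : IsLeaf T v <;> simp [φ, hu, hv] at huv
    · exact huv.2.1
    · exact huv
  · intro u v
    rw [hThat]
    by_cases hu : IsLeaf T u <;> by_cases hv : IsLeaf T v <;> simp only [φ, hu, hv,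
      dif_pos, dif_neg, not_false_iff]
    · -- both leaves: hatRel is False, and leaves are not adjacent
      show False ↔ T.Adj u v
      simp only [false_iff]
      intro hadj
      exact key u v hu (Or.inl hadj) hv
    · -- u leaf, v not leaf
      show (⟨v, hv⟩ : {x : α // ¬ IsLeaf T x}) = ⟨nbr u hu, hnbr_nl u hu⟩ ∧
        (if T.Adj (nbr u hu) u then true else false) = false ↔ T.Adj u v
      constructor
      · rintro ⟨h1, h2⟩
        have hv' : v = nbr u hu := congrArg Subtype.val h1
        have hnadj : ¬ T.Adj (nbr u hu) u := by
          intro h; simp [h] at h2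
        rcases hnbr_adj u hu with h | h
        · rw [hv']; exact h
        · exact absurd h hnadj
      · intro hadj
        have hv' : v = nbr u hu := hnbr_uniq u hu v (Or.inl hadj)
        subst hv'
        refine ⟨rfl, ?_⟩
        have : ¬ T.Adj (nbr u hu) u := T.asymm _ _ hadj
        simp [this]
    · -- u not leaf, v leaf
      show (⟨u, hu⟩ : {x : α // ¬ IsLeaf T x}) = ⟨nbr v hv, hnbr_nl v hv⟩ ∧
        (if T.Adj (nbr v hv) v then true else false) = true ↔ T.Adj u v
      constructor
      · rintro ⟨h1, h2⟩
        have hu' : u = nbr v hv := congrArg Subtype.val h1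
        have : T.Adj (nbr v hv) v := by
          by_contra h; simp [h] at h2
        rw [hu']; exact this
      · intro hadj
        have hu' : u = nbr v hv := hnbr_uniq v hv u (Or.inr hadj)
        subst hu'
        exact ⟨rfl, by simp [hadj]⟩
    · -- neither leaf
      exact Iff.rfl
end
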